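/- arXiv:2002.12840 — 3 statements merged into one kernel-verified Lean document; each statement's English description precedes it below -/
import Mathlib

section
/- For every T ∈ ℕ, s ∈ {1,…,T} and x, y ∈ ℤ: E^x_y[|X_{T−s} − Y_s|] = E^x_y[|X_{T−s} − Y_{s−1}| + 1_{X_{T−s} = Y_{s−1}}] = E^x_y[|X_{T−(s−1)} − Y_{s−1}|]. -/
open MeasureTheory ProbabilityTheory

noncomputable section

namespace SwitchingIdentities

variable {Ω : Type*} [MeasurableSpace Ω]

/-- The increment `ξ` has the fair `±1` law. -/
def FairSign (P : Measure Ω) (ξ : Ω → ℤ) : Prop :=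
  P {ω | ξ ω = 1} = 1 / 2 ∧ P {ω | ξ ω = -1} = 1 / 2

/-- `ξ` and `η` are the increment families of two independent simple symmetric random
walks on `ℤ`: all increments are measurable, fair `±1` coins, and the whole family
`(ξ₀, ξ₁, …, η₀, η₁, …)` is independent. -/
def IndepSSRWIncrements (P : Measure Ω) (ξ η : ℕ → Ω → ℤ) : Prop :=
  (∀ n, Measurable (ξ n)) ∧ (∀ n, Measurable (η n)) ∧
  (∀ n, FairSign P (ξ n)) ∧ (∀ n, FairSign P (η n)) ∧
  iIndepFun (m := fun _ : ℕ ⊕ ℕ => (inferInstance : MeasurableSpace ℤ)) (Sum.elim ξ η) P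

/-- The random walk with increments `ξ` started at `x`. -/
def walk (ξ : ℕ → Ω → ℤ) (x : ℤ) (t : ℕ) (ω : Ω) : ℤ :=
  x + ∑ i ∈ Finset.range t, ξ i ω

lemma fair_ae (P : Measure Ω) [IsProbabilityMeasure P] {ε : Ω → ℤ}
    (hm : Measurable ε) (hf : FairSign P ε) :
    ∀ᵐ ω ∂P, ε ω = 1 ∨ ε ω = -1 := by
  have hA : MeasurableSet {ω | ε ω = 1} := hm (measurableSet_singleton 1)
  have hB : MeasurableSet {ω | ε ω = -1} := hm (measurableSet_singleton (-1))
  have hd : Disjoint {ω | ε ω = 1} {ω | ε ω = -1} := by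
    rw [Set.disjoint_left]; rintro ω h1 h2; simp only [Set.mem_setOf_eq] at h1 h2; omega
  have hu : P ({ω | ε ω = 1} ∪ {ω | ε ω = -1}) = 1 := by
    rw [measure_union hd hB, hf.1, hf.2]
    rw [ENNReal.div_add_div_same]
    norm_num
    exact ENNReal.div_self (two_ne_zero) (ENNReal.ofNat_ne_top)
  have := (prob_compl_eq_zero_iff (hA.union hB)).mpr hu
  rw [ae_iff]
  convert this using 2
  ext ω; simp

lemma meas_int {f : ℤ → ℝ} : Measurable f := measurable_from_top

lemma abs_succ_add_abs_pred (a : ℤ) :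
    |a + 1| + |a - 1| = 2 * |a| + (if a = 0 then 2 else 0) := by
  simp only [Int.abs_eq_natAbs]
  split <;> omega

lemma abs_add_fair (P : Measure Ω) [IsProbabilityMeasure P] {Z ε : Ω → ℤ}
    (hZ : Measurable Z) (hε : Measurable ε) (hfair : FairSign P ε)
    (hind : IndepFun Z ε P) (hint : Integrable (fun ω => ((Z ω : ℤ) : ℝ)) P) :
    ∫ ω, ((|Z ω + ε ω| : ℤ) : ℝ) ∂P
      = ∫ ω, (((|Z ω| : ℤ) : ℝ) + (if Z ω = 0 then (1:ℝ) else 0)) ∂P := by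
  classical
  set g1 : Ω → ℝ := fun ω => ((|Z ω + 1| : ℤ) : ℝ) with hg1
  set g2 : Ω → ℝ := fun ω => ((|Z ω - 1| : ℤ) : ℝ) with hg2
  set i1 : Ω → ℝ := fun ω => if ε ω = 1 then (1:ℝ) else 0 with hi1
  set i2 : Ω → ℝ := fun ω => if ε ω = -1 then (1:ℝ) else 0 with hi2
  have hg1m : Measurable g1 := (meas_int (f := fun a : ℤ => ((|a + 1| : ℤ) : ℝ))).comp hZ
  have hg2m : Measurable g2 := (meas_int (f := fun a : ℤ => ((|a - 1| : ℤ) : ℝ))).comp hZ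
  have hi1m : Measurable i1 := (meas_int (f := fun a : ℤ => if a = 1 then (1:ℝ) else 0)).comp hε
  have hi2m : Measurable i2 := (meas_int (f := fun a : ℤ => if a = -1 then (1:ℝ) else 0)).comp hε
  have hbound : Integrable (fun ω => |((Z ω : ℤ) : ℝ)| + 1) P := hint.abs.add (integrable_const 1)
  have hg1i : Integrable g1 P := by
    refine hbound.mono' hg1m.aestronglyMeasurable (ae_of_all _ fun ω => ?_)
    simp only [hg1, Real.norm_eq_abs]
    push_cast
    rw [abs_abs]
    have := abs_add_le (Z ω : ℝ) 1
    simp at this ⊢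
    linarith [abs_nonneg ((Z ω : ℝ))]
  have hg2i : Integrable g2 P := by
    refine hbound.mono' hg2m.aestronglyMeasurable (ae_of_all _ fun ω => ?_)
    simp only [hg2, Real.norm_eq_abs]
    push_cast
    rw [abs_abs]
    have := abs_sub ((Z ω : ℝ)) 1
    have h2 := abs_sub_abs_le_abs_sub ((Z ω : ℝ)) 1
    have := abs_sub_le ((Z ω : ℝ)) 0 (1:ℝ)
    simp at this
    linarith
  have hpi1 : Integrable (fun ω => i1 ω * g1 ω) P :=
    hg1i.bdd_mul (c := 1) hi1m.aestronglyMeasurable (ae_of_all _ fun ω => by simp only [hi1]; split <;> simp)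
  have hpi2 : Integrable (fun ω => i2 ω * g2 ω) P :=
    hg2i.bdd_mul (c := 1) hi2m.aestronglyMeasurable (ae_of_all _ fun ω => by simp only [hi2]; split <;> simp)
  -- independence
  have hind1 : IndepFun i1 g1 P :=
    hind.symm.comp (meas_int (f := fun a : ℤ => if a = 1 then (1:ℝ) else 0))
      (meas_int (f := fun a : ℤ => ((|a + 1| : ℤ) : ℝ)))
  have hind2 : IndepFun i2 g2 P :=
    hind.symm.comp (meas_int (f := fun a : ℤ => if a = -1 then (1:ℝ) else 0))
      (meas_int (f := fun a : ℤ => ((|a - 1| : ℤ) : ℝ)))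
  have hA : MeasurableSet {ω | ε ω = 1} := hε (measurableSet_singleton 1)
  have hB : MeasurableSet {ω | ε ω = -1} := hε (measurableSet_singleton (-1))
  have hi1int : ∫ ω, i1 ω ∂P = 1/2 := by
    have : i1 = Set.indicator {ω | ε ω = 1} (1 : Ω → ℝ) := by
      funext ω; simp [hi1, Set.indicator_apply, Set.mem_setOf_eq]
    rw [this, integral_indicator_one hA, measureReal_def, hfair.1]
    simp [ENNReal.toReal_div]
  have hi2int : ∫ ω, i2 ω ∂P = 1/2 := by
    have : i2 = Set.indicator {ω | ε ω = -1} (1 : Ω → ℝ) := by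
      funext ω; simp [hi2, Set.indicator_apply, Set.mem_setOf_eq]
    rw [this, integral_indicator_one hB, measureReal_def, hfair.2]
    simp [ENNReal.toReal_div]
  have hsplit : ∫ ω, ((|Z ω + ε ω| : ℤ) : ℝ) ∂P
      = ∫ ω, (i1 ω * g1 ω + i2 ω * g2 ω) ∂P := by
    refine integral_congr_ae ?_
    filter_upwards [fair_ae P hε hfair] with ω hω
    rcases hω with hω | hω <;> simp [hg1, hg2, hi1, hi2, hω, ← sub_eq_add_neg]
  have e1 : ∫ ω, i1 ω * g1 ω ∂P = (1/2) * ∫ ω, g1 ω ∂P := by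
    have := hind1.integral_fun_mul_eq_mul_integral hi1m.aestronglyMeasurable hg1m.aestronglyMeasurable
    simpa [hi1int] using this
  have e2 : ∫ ω, i2 ω * g2 ω ∂P = (1/2) * ∫ ω, g2 ω ∂P := by
    have := hind2.integral_fun_mul_eq_mul_integral hi2m.aestronglyMeasurable hg2m.aestronglyMeasurable
    simpa [hi2int] using this
  rw [hsplit, integral_add hpi1 hpi2, e1, e2]
  have : ∫ ω, (((|Z ω| : ℤ) : ℝ) + (if Z ω = 0 then (1:ℝ) else 0)) ∂P
      = ∫ ω, ((1/2) * g1 ω + (1/2) * g2 ω) ∂P := by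
    refine integral_congr_ae (ae_of_all _ fun ω => ?_)
    have hk := abs_succ_add_abs_pred (Z ω)
    by_cases hz : Z ω = 0
    · have hki : |Z ω + 1| + |Z ω - 1| = 2 * |Z ω| + 2 := by simpa [hz] using hk
      have hkr : ((|Z ω + 1| : ℤ) : ℝ) + ((|Z ω - 1| : ℤ) : ℝ)
          = 2 * ((|Z ω| : ℤ) : ℝ) + 2 := by exact_mod_cast hki
      simp only [hg1, hg2, if_pos hz]
      linarith
    · have hki : |Z ω + 1| + |Z ω - 1| = 2 * |Z ω| := by simpa [hz] using hk
      have hkr : ((|Z ω + 1| : ℤ) : ℝ) + ((|Z ω - 1| : ℤ) : ℝ)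
          = 2 * ((|Z ω| : ℤ) : ℝ) := by exact_mod_cast hki
      simp only [hg1, hg2, if_neg hz]
      linarith
  rw [this, integral_add (hg1i.const_mul _) (hg2i.const_mul _),
    integral_const_mul, integral_const_mul]

lemma meas_int' {α : Type*} [MeasurableSpace α] {f : ℤ → α} : Measurable f :=
  measurable_from_top


/-- core argument: for `1 ≤ s ≤ T` and starting points `x, y ∈ ℤ`,
`E^x_y[|X_{T−s} − Y_s|] = E^x_y[|X_{T−s} − Y_{s−1}| + 1_{X_{T−s} = Y_{s−1}}]
  = E^x_y[|X_{T−(s−1)} − Y_{s−1}|]`. -/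
theorem core_identity (P : Measure Ω) [IsProbabilityMeasure P] (ξ η : ℕ → Ω → ℤ)
    (h : IndepSSRWIncrements P ξ η) (T s : ℕ) (hs1 : 1 ≤ s) (hsT : s ≤ T) (x y : ℤ) :
    (∫ ω, ((|walk ξ x (T - s) ω - walk η y s ω| : ℤ) : ℝ) ∂P
      = ∫ ω, (((|walk ξ x (T - s) ω - walk η y (s - 1) ω| : ℤ) : ℝ)
          + (if walk ξ x (T - s) ω = walk η y (s - 1) ω then (1 : ℝ) else 0)) ∂P) ∧
    (∫ ω, (((|walk ξ x (T - s) ω - walk η y (s - 1) ω| : ℤ) : ℝ)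
          + (if walk ξ x (T - s) ω = walk η y (s - 1) ω then (1 : ℝ) else 0)) ∂P
      = ∫ ω, ((|walk ξ x (T - (s - 1)) ω - walk η y (s - 1) ω| : ℤ) : ℝ) ∂P) := by
  classical
  obtain ⟨hξm, hηm, hξf, hηf, hiid⟩ := h
  obtain ⟨s', rfl⟩ : ∃ s', s = s' + 1 := ⟨s - 1, (Nat.succ_pred_eq_of_pos hs1).symm⟩
  set f' : ℕ ⊕ ℕ → Ω → ℤ := Sum.elim ξ (fun n ω => -η n ω) with hf'
  have hf'm : ∀ i, Measurable (f' i) := by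
    rintro (n | n)
    · exact hξm n
    · exact (hηm n).neg
  have hf'indep : iIndepFun (m := fun _ : ℕ ⊕ ℕ => (inferInstance : MeasurableSpace ℤ)) f' P := by
    have hcomp : iIndepFun (m := fun _ : ℕ ⊕ ℕ => (inferInstance : MeasurableSpace ℤ))
        (fun i => Sum.elim (fun _ : ℕ => (id : ℤ → ℤ)) (fun _ : ℕ => (Neg.neg : ℤ → ℤ)) i
          ∘ Sum.elim ξ η i) P :=
      hiid.comp _ (by rintro (n | n) <;> dsimp only [Sum.elim_inl, Sum.elim_inr] <;>
        exact meas_int')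
    have heq : (fun i => Sum.elim (fun _ : ℕ => (id : ℤ → ℤ))
        (fun _ : ℕ => (Neg.neg : ℤ → ℤ)) i ∘ Sum.elim ξ η i) = f' := by
      funext i; cases i <;> rfl
    rwa [heq] at hcomp
  have hf'fair : ∀ i, FairSign P (f' i) := by
    rintro (n | n)
    · exact hξf n
    · constructor
      · have hs : {ω | f' (Sum.inr n) ω = 1} = {ω | η n ω = -1} := by
          ext ω; simp only [hf', Sum.elim_inr, Set.mem_setOf_eq]; omega
        rw [hs]; exact (hηf n).2
      · have hs : {ω | f' (Sum.inr n) ω = -1} = {ω | η n ω = 1} := by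
          ext ω; simp only [hf', Sum.elim_inr, Set.mem_setOf_eq]; omega
        rw [hs]; exact (hηf n).1
  have hf'int : ∀ i, Integrable (fun ω => ((f' i ω : ℤ) : ℝ)) P := by
    intro i
    refine (integrable_const (1 : ℝ)).mono'
      ((meas_int (f := fun a : ℤ => (a : ℝ))).comp (hf'm i)).aestronglyMeasurable ?_
    filter_upwards [fair_ae P (hf'm i) (hf'fair i)] with ω hω
    rcases hω with hω | hω <;> simp [hω]
  set S : Finset (ℕ ⊕ ℕ) := (Finset.range (T - (s' + 1))).disjSum (Finset.range s') with hS
  set Z : Ω → ℤ := fun ω => (x - y) + ∑ i ∈ S, f' i ω with hZdef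
  have hZeq : ∀ ω, Z ω = walk ξ x (T - (s' + 1)) ω - walk η y s' ω := by
    intro ω
    simp only [hZdef, hS, Finset.sum_disjSum, hf', Sum.elim_inl, Sum.elim_inr,
      Finset.sum_neg_distrib, walk]
    ring
  have hZm : Measurable Z :=
    measurable_const.add (Finset.measurable_sum S fun i _ => hf'm i)
  have hZint : Integrable (fun ω => ((Z ω : ℤ) : ℝ)) P := by
    have heq : (fun ω => ((Z ω : ℤ) : ℝ))
        = fun ω => (((x - y : ℤ) : ℝ) + ∑ i ∈ S, ((f' i ω : ℤ) : ℝ)) := by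
      funext ω; push_cast [hZdef]; ring
    rw [heq]
    exact (integrable_const _).add (integrable_finset_sum S fun i _ => hf'int i)
  -- generic independence step
  have hindep : ∀ j ∉ S, IndepFun Z (f' j) P := by
    intro j hj
    have h0 := hf'indep.indepFun_finsetSum_of_notMem hf'm hj
    have h1 := h0.comp (φ := fun z : ℤ => (x - y) + z) (ψ := (id : ℤ → ℤ)) meas_int' meas_int'
    have heq : ((fun z : ℤ => (x - y) + z) ∘ ∑ i ∈ S, f' i) = Z := by
      funext ω; simp [hZdef, Finset.sum_apply]
    rwa [heq, Function.id_comp] at h1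
  have key : ∀ j ∉ S, ∫ ω, ((|Z ω + f' j ω| : ℤ) : ℝ) ∂P
      = ∫ ω, (((|Z ω| : ℤ) : ℝ) + (if Z ω = 0 then (1 : ℝ) else 0)) ∂P := fun j hj =>
    abs_add_fair P hZm (hf'm j) (hf'fair j) (hindep j hj) hZint
  have hmid : ∫ ω, (((|walk ξ x (T - (s' + 1)) ω - walk η y (s' + 1 - 1) ω| : ℤ) : ℝ)
          + (if walk ξ x (T - (s' + 1)) ω = walk η y (s' + 1 - 1) ω then (1 : ℝ) else 0)) ∂P
      = ∫ ω, (((|Z ω| : ℤ) : ℝ) + (if Z ω = 0 then (1 : ℝ) else 0)) ∂P := by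
    refine integral_congr_ae (ae_of_all _ fun ω => ?_)
    simp only [Nat.add_sub_cancel, hZeq ω, sub_eq_zero]
  constructor
  · have hj : Sum.inr s' ∉ S := by simp [hS]
    have h1 : ∫ ω, ((|walk ξ x (T - (s' + 1)) ω - walk η y (s' + 1) ω| : ℤ) : ℝ) ∂P
        = ∫ ω, ((|Z ω + f' (Sum.inr s') ω| : ℤ) : ℝ) ∂P := by
      refine integral_congr_ae (ae_of_all _ fun ω => ?_)
      dsimp only
      have : walk η y (s' + 1) ω = walk η y s' ω + η s' ω := by
        simp [walk, Finset.sum_range_succ]; ring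
      rw [this, hZeq ω]
      simp [hf']
      ring_nf
    rw [h1, key _ hj, hmid]
  · have hj : Sum.inl (T - (s' + 1)) ∉ S := by simp [hS]
    have h2 : ∫ ω, ((|walk ξ x (T - (s' + 1 - 1)) ω - walk η y (s' + 1 - 1) ω| : ℤ) : ℝ) ∂P
        = ∫ ω, ((|Z ω + f' (Sum.inl (T - (s' + 1))) ω| : ℤ) : ℝ) ∂P := by
      refine integral_congr_ae (ae_of_all _ fun ω => ?_)
      dsimp only
      have hT : T - (s' + 1 - 1) = (T - (s' + 1)) + 1 := by omega
      have : walk ξ x (T - (s' + 1 - 1)) ω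
          = walk ξ x (T - (s' + 1)) ω + ξ (T - (s' + 1)) ω := by
        rw [hT]; simp [walk, Finset.sum_range_succ]; ring
      rw [this, hZeq ω]
      simp [hf']
      ring_nf
    rw [hmid, h2, key _ hj]


end SwitchingIdentities
end
end

section
/- Let z ∈ ℤ and suppose there exists u ∈ ℕ with u ≤ T and (u, z) ∉ D. Then U_{μ^{Root}}(z) = U_{μ^{Root}_T}(z). In particular, on the event {τ* < T} one has U_{μ^{Root}}(Y_{τ*}) = U_{μ^{Root}_T}(Y_{τ*}). -/
open MeasureTheory ProbabilityTheory

noncomputable section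

namespace SwitchingIdentities

variable {Ω : Type*} [MeasurableSpace Ω]

/-- A Root continuation set: if `(t,m) ∈ D` then `(s,m) ∈ D` for all `s < t`. -/
def IsRootCont {α : Type*} (D : Set (ℕ × α)) : Prop :=
  ∀ t m, (t, m) ∈ D → ∀ s, s < t → (s, m) ∈ D

/-- A Rost continuation set: if `(t,m) ∈ D` then `(s,m) ∈ D` for all `s > t`. -/
def IsRostCont {α : Type*} (D : Set (ℕ × α)) : Prop :=
  ∀ t m, (t, m) ∈ D → ∀ s, t < s → (s, m) ∈ D

/-- `hit D Z ω = inf {t : (t, Z_t) ∉ D}` (junk value `0` if the walk never leaves `D`). -/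
def hit {α : Type*} (D : Set (ℕ × α)) (Z : ℕ → Ω → α) (ω : Ω) : ℕ :=
  sInf {t | (t, Z t ω) ∉ D}

/-- `hitBy D Z n ω = inf {t : (t, Z_t) ∉ D} ∧ n` (equal to `n` if the walk never leaves `D`). -/
def hitBy {α : Type*} (D : Set (ℕ × α)) (Z : ℕ → Ω → α) (n : ℕ) (ω : Ω) : ℕ :=
  sInf ({t | (t, Z t ω) ∉ D} ∪ {n})

/-- `revHitBy D Z T ω = inf {t : (T − t, Z_t) ∉ D} ∧ T`, the exit time of the time-reversed
space-time walk, capped at `T`. -/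
def revHitBy {α : Type*} (D : Set (ℕ × α)) (Z : ℕ → Ω → α) (T : ℕ) (ω : Ω) : ℕ :=
  sInf ({t | (T - t, Z t ω) ∉ D} ∪ {T})

/-- The potential function `U_m(z) = −∑_x |z − x| m({x})` of a measure `m` on `ℤ`. -/
def potential (m : Measure ℤ) (z : ℤ) : ℝ :=
  -∑' w : ℤ, (|z - w| : ℤ) * (m {w}).toReal

/-- A measure on `ℤ` has a finite first moment. -/
def FiniteFirstMoment (m : Measure ℤ) : Prop :=
  Integrable (fun z : ℤ => (z : ℝ)) m

/-- `τ` is a stopping time of the natural filtration of the process `Z`: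
`{τ ≤ n} ∈ σ(Z_0, …, Z_n)` for every `n`. -/
def IsNatStopping {α : Type*} [MeasurableSpace α] (Z : ℕ → Ω → α) (τ : Ω → ℕ) : Prop :=
  ∀ n : ℕ,
    MeasurableSet[MeasurableSpace.comap (fun ω => (fun i : Fin (n + 1) => Z i ω)) inferInstance]
      {ω | τ ω ≤ n}

/-- The law `μ^{Root}` of `X_{ρ^{Root}}` where `X` has increments `ξ` and `X_0 ∼ λ`. -/
def muRoot (P : Measure Ω) (ξ : ℕ → Ω → ℤ) (D : Set (ℕ × ℤ)) (lam : Measure ℤ) : Measure ℤ :=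
  Measure.map (fun p : ℤ × Ω => walk ξ p.1 (hit D (walk ξ p.1) p.2) p.2) (lam.prod P)

/-- The law `μ^{Root}_T` of `X_{ρ^{Root} ∧ T}` where `X` has increments `ξ` and `X_0 ∼ λ`. -/
def muRootT (P : Measure Ω) (ξ : ℕ → Ω → ℤ) (D : Set (ℕ × ℤ)) (lam : Measure ℤ) (T : ℕ) :
    Measure ℤ :=
  Measure.map (fun p : ℤ × Ω => walk ξ p.1 (hitBy D (walk ξ p.1) T p.2) p.2) (lam.prod P)


/-! ### Auxiliary lemmas -/

open scoped ENNReal NNReal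
open Filter Topology

lemma sInf_union_eq_of_exists {S : Set ℕ} {m s₀ : ℕ} (h₀ : s₀ ∈ S) (hm : s₀ ≤ m) :
    sInf (S ∪ {m}) = sInf S := by
  have hne : (S ∪ {m}).Nonempty := ⟨s₀, Or.inl h₀⟩
  have h1 : sInf (S ∪ {m}) ≤ sInf S := Nat.sInf_le (Or.inl (Nat.sInf_mem ⟨s₀, h₀⟩))
  have h2 : sInf S ≤ sInf (S ∪ {m}) := by
    rcases Nat.sInf_mem hne with h | h
    · exact Nat.sInf_le h
    · have hh : sInf (S ∪ {m}) = m := h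
      have := Nat.sInf_le h₀
      omega
  omega

lemma sInf_union_eq_of_forall {S : Set ℕ} {m : ℕ} (h : ∀ s < m, s ∉ S) :
    sInf (S ∪ {m}) = m := by
  have hmem : sInf (S ∪ {m}) ∈ S ∪ {m} := Nat.sInf_mem ⟨m, Or.inr rfl⟩
  have hle : sInf (S ∪ {m}) ≤ m := Nat.sInf_le (Or.inr rfl)
  rcases hmem with hmem | hmem
  · rcases eq_or_lt_of_le hle with he | hlt
    · exact he
    · exact absurd hmem (h _ hlt)
  · exact hmem

lemma measurableSet_sInf_eq {γ : Type*} [MeasurableSpace γ] {S : γ → Set ℕ}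
    (hS : ∀ k, MeasurableSet {p | k ∈ S p}) (n : ℕ) :
    MeasurableSet {p | sInf (S p) = n} := by
  have heq : {p | sInf (S p) = n} =
      ({p | n ∈ S p} ∩ ⋂ k, ⋂ _ : k < n, {p | k ∈ S p}ᶜ) ∪
      ({p : γ | n = 0} ∩ ⋂ k, {p | k ∈ S p}ᶜ) := by
    ext p
    simp only [Set.mem_union, Set.mem_inter_iff, Set.mem_iInter, Set.mem_compl_iff,
      Set.mem_setOf_eq]
    constructor
    · intro h
      by_cases hne : (S p).Nonempty
      · left
        refine ⟨h ▸ Nat.sInf_mem hne, fun k hk hkS => ?_⟩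
        have := Nat.sInf_le hkS
        omega
      · right
        rw [Set.not_nonempty_iff_eq_empty] at hne
        rw [hne] at h
        simp only [Nat.sInf_empty] at h
        exact ⟨h.symm, fun k hk => by rw [hne] at hk; exact hk⟩
    · rintro (⟨hn, hk⟩ | ⟨h0, hk⟩)
      · refine le_antisymm (Nat.sInf_le hn) ?_
        by_contra hlt
        push_neg at hlt
        exact hk _ hlt (Nat.sInf_mem ⟨n, hn⟩)
      · have : S p = ∅ := Set.eq_empty_iff_forall_notMem.mpr hk
        rw [this, Nat.sInf_empty, h0]
  rw [heq]
  exact ((hS n).inter (MeasurableSet.iInter fun k => MeasurableSet.iInter fun _ =>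
    (hS k).compl)).union ((MeasurableSet.const _).inter
    (MeasurableSet.iInter fun k => (hS k).compl))

lemma measurable_stopped {γ : Type*} [MeasurableSpace γ] (w : ℕ → γ → ℤ)
    (hw : ∀ n, Measurable (w n)) (σ : γ → ℕ) (hσ : ∀ n, MeasurableSet {p | σ p = n}) :
    Measurable fun p => w (σ p) p := by
  apply measurable_to_countable'
  intro v
  have heq : (fun p => w (σ p) p) ⁻¹' {v} = ⋃ n, {p | σ p = n} ∩ w n ⁻¹' {v} := by
    ext p
    simp only [Set.mem_preimage, Set.mem_singleton_iff, Set.mem_iUnion, Set.mem_inter_iff,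
      Set.mem_setOf_eq]
    constructor
    · intro h; exact ⟨σ p, rfl, h⟩
    · rintro ⟨n, hn, h⟩; rw [hn]; exact h
  rw [heq]
  exact MeasurableSet.iUnion fun n => (hσ n).inter (hw n (measurableSet_singleton v))

lemma enorm_int (a : ℤ) : (‖(a : ℝ)‖₊ : ℝ≥0∞) = (a.natAbs : ℝ≥0∞) := by
  rw [← enorm_eq_nnnorm, ← ofReal_norm, Real.norm_eq_abs, ← Int.cast_abs, Int.abs_eq_natAbs,
    Int.cast_natCast, ENNReal.ofReal_natCast]

lemma natAbs_coin {z m : ℤ} (h : m ≠ z) :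
    ((z - m - 1).natAbs : ℝ≥0∞) + ((z - m - (-1)).natAbs : ℝ≥0∞)
      = 2 * ((z - m).natAbs : ℝ≥0∞) := by
  have h2 : (z - m - 1).natAbs + (z - m - (-1)).natAbs = 2 * (z - m).natAbs := by omega
  calc ((z - m - 1).natAbs : ℝ≥0∞) + ((z - m - (-1)).natAbs : ℝ≥0∞)
      = (((z - m - 1).natAbs + (z - m - (-1)).natAbs : ℕ) : ℝ≥0∞) := by rw [Nat.cast_add]
    _ = ((2 * (z - m).natAbs : ℕ) : ℝ≥0∞) := by rw [h2]
    _ = 2 * ((z - m).natAbs : ℝ≥0∞) := by rw [Nat.cast_mul, Nat.cast_ofNat]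

lemma lintegral_coin (μ : Measure ℤ) [IsProbabilityMeasure μ]
    (h1 : μ {1} = 1 / 2) (h2 : μ {-1} = 1 / 2) (φ : ℤ → ℝ≥0∞) :
    ∫⁻ e, φ e ∂μ = (φ 1 + φ (-1)) / 2 := by
  rw [lintegral_countable' φ]
  have hu : μ ({1, -1} : Set ℤ) = 1 := by
    rw [Set.insert_eq, measure_union (by simp) (measurableSet_singleton _), h1, h2]
    exact ENNReal.div_add_div_same.trans
      (by rw [one_add_one_eq_two]; exact ENNReal.div_self two_ne_zero ENNReal.ofNat_ne_top)
  have hc : μ ({1, -1}ᶜ : Set ℤ) = 0 := by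
    rw [measure_compl (by measurability) (measure_ne_top μ _), hu, measure_univ, tsub_self]
  have hz : ∀ e : ℤ, e ∉ ({1, -1} : Finset ℤ) → φ e * μ {e} = 0 := by
    intro e he
    have hsub : ({e} : Set ℤ) ⊆ ({1, -1} : Set ℤ)ᶜ := by
      simp only [Finset.mem_insert, Finset.mem_singleton] at he
      push_neg at he
      intro x hx
      simp only [Set.mem_singleton_iff] at hx
      subst hx
      simp [he.1, he.2]
    rw [measure_mono_null hsub hc, mul_zero]
  rw [tsum_eq_sum hz, Finset.sum_pair (by norm_num : (1 : ℤ) ≠ -1), h1, h2]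
  simp only [ENNReal.div_eq_inv_mul]
  ring

lemma lintegral_pair {P : Measure Ω} [IsProbabilityMeasure P] {ξ η : ℕ → Ω → ℤ}
    (h : IndepSSRWIncrements P ξ η) (t : ℕ) (G : (Fin t → ℤ) → ℤ → ℝ≥0∞) :
    ∫⁻ ω, G (fun i => ξ i ω) (ξ t ω) ∂P
      = ∫⁻ ω, (G (fun i => ξ i ω) 1 + G (fun i => ξ i ω) (-1)) / 2 ∂P := by
  obtain ⟨hmξ, hmη, hfξ, -, hind⟩ := h
  set W : Ω → (Fin t → ℤ) := fun ω i => ξ i ω with hWdef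
  have hWm : Measurable W := measurable_pi_lambda _ fun i => hmξ i
  have hindep : IndepFun W (ξ t) P := by
    set Sf : Finset (ℕ ⊕ ℕ) := (Finset.range t).image Sum.inl with hSf
    set Tf : Finset (ℕ ⊕ ℕ) := {Sum.inl t} with hTf
    have hdisj : Disjoint Sf Tf := by
      simp only [hSf, hTf, Finset.disjoint_left, Finset.mem_image, Finset.mem_range,
        Finset.mem_singleton]
      rintro x ⟨i, hi, rfl⟩ hx
      rw [Sum.inl.injEq] at hx
      omega
    have hmeas : ∀ i : ℕ ⊕ ℕ, Measurable (Sum.elim ξ η i) := by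
      rintro (i | i)
      · exact hmξ i
      · exact hmη i
    have hS := hind.indepFun_finset Sf Tf hdisj hmeas
    have hφ : Measurable (fun g : (Sf → ℤ) => (fun i : Fin t =>
        g ⟨Sum.inl (i : ℕ), by simp [hSf, i.isLt]⟩)) :=
      measurable_pi_lambda _ fun i => measurable_pi_apply _
    have hψ : Measurable (fun g : (Tf → ℤ) => g ⟨Sum.inl t, by simp [hTf]⟩) :=
      measurable_pi_apply _
    exact hS.comp hφ hψ
  have hmap : P.map (fun ω => (W ω, ξ t ω)) = (P.map W).prod (P.map (ξ t)) :=
    (indepFun_iff_map_prod_eq_prod_map_map hWm.aemeasurable (hmξ t).aemeasurable).mp hindep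
  have hGm : Measurable fun q : (Fin t → ℤ) × ℤ => G q.1 q.2 := measurable_of_countable _
  haveI : IsProbabilityMeasure (P.map (ξ t)) := Measure.isProbabilityMeasure_map (hmξ t).aemeasurable
  haveI : IsProbabilityMeasure (P.map W) := Measure.isProbabilityMeasure_map hWm.aemeasurable
  have h1 : (P.map (ξ t)) {1} = 1 / 2 := by
    rw [Measure.map_apply (hmξ t) (measurableSet_singleton _)]
    exact (hfξ t).1
  have h2 : (P.map (ξ t)) {-1} = 1 / 2 := by
    rw [Measure.map_apply (hmξ t) (measurableSet_singleton _)]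
    exact (hfξ t).2
  calc ∫⁻ ω, G (W ω) (ξ t ω) ∂P
      = ∫⁻ q, G q.1 q.2 ∂(P.map (fun ω => (W ω, ξ t ω))) :=
        (lintegral_map hGm (hWm.prodMk (hmξ t))).symm
    _ = ∫⁻ w, ∫⁻ e, G w e ∂(P.map (ξ t)) ∂(P.map W) := by
        rw [hmap, lintegral_prod _ hGm.aemeasurable]
    _ = ∫⁻ w, (G w 1 + G w (-1)) / 2 ∂(P.map W) :=
        lintegral_congr fun w => lintegral_coin _ h1 h2 (G w)
    _ = ∫⁻ ω, (G (W ω) 1 + G (W ω) (-1)) / 2 ∂P :=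
        lintegral_map (measurable_of_countable _) hWm

lemma potential_eq_toReal (ν : Measure (ℤ × Ω)) [IsProbabilityMeasure ν]
    {f : ℤ × Ω → ℤ} (hf : Measurable f) (z : ℤ) :
    potential (ν.map f) z = -(∫⁻ p, (((z - f p).natAbs : ℕ) : ℝ≥0∞) ∂ν).toReal := by
  haveI : IsProbabilityMeasure (ν.map f) := Measure.isProbabilityMeasure_map hf.aemeasurable
  have hmg : Measurable fun w : ℤ => (((z - w).natAbs : ℕ) : ℝ≥0∞) := measurable_of_countable _
  rw [potential]
  congr 1
  rw [← lintegral_map hmg hf, lintegral_countable',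
    ENNReal.tsum_toReal_eq (fun w => ENNReal.mul_ne_top (ENNReal.natCast_ne_top _)
      (measure_ne_top _ _))]
  refine tsum_congr fun w => ?_
  rw [ENNReal.toReal_mul, ENNReal.toReal_natCast]
  congr 1
  rw [Nat.cast_natAbs, Int.cast_abs]

lemma key_potential_eq (P : Measure Ω) [IsProbabilityMeasure P] (ξ η : ℕ → Ω → ℤ)
    (h : IndepSSRWIncrements P ξ η)
    (D : Set (ℕ × ℤ)) (hD : IsRootCont D)
    (lam : Measure ℤ) [IsProbabilityMeasure lam]
    (T : ℕ)
    (hfin : ∀ᵐ p ∂(lam.prod P), ∃ t, (t, walk ξ p.1 t p.2) ∉ D)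
    (hUI : UniformIntegrable
      (fun (t : ℕ) (p : ℤ × Ω) => ((walk ξ p.1 (hitBy D (walk ξ p.1) t p.2) p.2 : ℤ) : ℝ))
      1 (lam.prod P))
    (z : ℤ) (hz : ∃ u : ℕ, u ≤ T ∧ (u, z) ∉ D) :
    potential (muRoot P ξ D lam) z = potential (muRootT P ξ D lam T) z := by
  classical
  obtain ⟨u, huT, huz⟩ := hz
  have hmξ := h.1
  set ν : Measure (ℤ × Ω) := lam.prod P with hν
  haveI : IsProbabilityMeasure ν := by rw [hν]; infer_instance
  set Z : ℕ → ℤ × Ω → ℤ := fun t p => walk ξ p.1 t p.2 with hZ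
  have hZm : ∀ t, Measurable (Z t) := by
    intro t
    simp only [hZ, walk]
    exact measurable_fst.add (Finset.measurable_sum _ fun i _ => ((hmξ i).comp measurable_snd))
  set S : ℤ × Ω → Set ℕ := fun p => {s | (s, Z s p) ∉ D} with hS
  have hSm : ∀ k, MeasurableSet {p | k ∈ S p} := by
    intro k
    have he : {p | k ∈ S p} = Z k ⁻¹' {m : ℤ | (k, m) ∉ D} := by
      ext p; simp only [hS, Set.mem_setOf_eq, Set.mem_preimage]
    rw [he]
    exact hZm k ((Set.to_countable _).measurableSet)
  set f : ℕ → ℤ × Ω → ℤ := fun t p => Z (sInf (S p ∪ {t})) p with hfdef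
  set g : ℤ × Ω → ℤ := fun p => Z (sInf (S p)) p with hgdef
  have hσm : ∀ t n, MeasurableSet {p | sInf (S p ∪ {t}) = n} := by
    intro t
    refine measurableSet_sInf_eq (fun k => ?_)
    have he : {p | k ∈ S p ∪ {t}} = {p | k ∈ S p} ∪ {p : ℤ × Ω | k ∈ ({t} : Set ℕ)} := by
      ext p; simp only [Set.mem_union, Set.mem_setOf_eq]
    rw [he]
    exact (hSm k).union (MeasurableSet.const _)
  have hfm : ∀ t, Measurable (f t) := by
    intro t
    simp only [hfdef]
    exact measurable_stopped Z hZm _ (hσm t)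
  have hgm : Measurable g := by
    simp only [hgdef]
    exact measurable_stopped Z hZm _ (measurableSet_sInf_eq hSm)
  have hmuR : muRoot P ξ D lam = ν.map g := by
    simp only [hν, hgdef, hZ, hS]; rfl
  have hmuT : muRootT P ξ D lam T = ν.map (f T) := by
    simp only [hν, hfdef, hZ, hS]; rfl
  rw [hmuR, hmuT, potential_eq_toReal ν hgm z, potential_eq_toReal ν (hfm T) z]
  set c : ℤ → ℝ≥0∞ := fun m => (((z - m).natAbs : ℕ) : ℝ≥0∞) with hc
  have hcm : Measurable c := measurable_of_countable _
  have hcoin : ∀ m : ℤ, m ≠ z → c (m + 1) + c (m + (-1)) = 2 * c m := by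
    intro m hm
    simp only [hc]
    rw [show z - (m + 1) = z - m - 1 from by ring,
      show z - (m + (-1)) = z - m - (-1) from by ring]
    exact natAbs_coin hm
  suffices hkey : (∫⁻ p, c (g p) ∂ν) = ∫⁻ p, c (f T p) ∂ν by
    have hkey' : (∫⁻ p, (((z - g p).natAbs : ℕ) : ℝ≥0∞) ∂ν)
        = ∫⁻ p, (((z - f T p).natAbs : ℕ) : ℝ≥0∞) ∂ν := by
      simpa only [hc] using hkey
    rw [hkey']
  set I : ℕ → ℝ≥0∞ := fun t => ∫⁻ p, c (f t p) ∂ν with hI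
  -- Step 1: the truncated potentials are constant from time `u` on
  have hstep : ∀ t, u ≤ t → I (t + 1) = I t := by
    intro t htu
    have hzD : (t, z) ∉ D := by
      intro hmemD
      rcases eq_or_lt_of_le htu with heq | hlt
      · exact huz (heq ▸ hmemD)
      · exact huz (hD t z hmemD u hlt)
    set A : Set (ℤ × Ω) := {p | ∀ s ≤ t, (s, Z s p) ∈ D} with hA
    have hAm : MeasurableSet A := by
      have he : A = ⋂ s, ⋂ _ : s ≤ t, {p | s ∈ S p}ᶜ := by
        ext p
        simp only [hA, hS, Set.mem_iInter, Set.mem_compl_iff, Set.mem_setOf_eq, not_not]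
      rw [he]
      exact MeasurableSet.iInter fun s => MeasurableSet.iInter fun _ => (hSm s).compl
    have hfA1 : ∀ p ∈ A, f t p = Z t p := by
      intro p hp
      have hfor1 : ∀ s, s < t → s ∉ S p := fun s hs hsS => hsS (hp s (le_of_lt hs))
      simp only [hfdef]
      rw [sInf_union_eq_of_forall hfor1]
    have hfA2 : ∀ p ∈ A, f (t + 1) p = Z t p + ξ t p.2 := by
      intro p hp
      have hfor2 : ∀ s, s < t + 1 → s ∉ S p := fun s hs hsS => hsS (hp s (by omega))
      simp only [hfdef]
      rw [sInf_union_eq_of_forall hfor2]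
      simp only [hZ, walk, Finset.sum_range_succ]
      ring
    have hfnA : ∀ p ∉ A, f (t + 1) p = f t p := by
      intro p hp
      simp only [hA, Set.mem_setOf_eq] at hp
      push_neg at hp
      obtain ⟨s₀, hs₀t, hs₀⟩ := hp
      have hs₀S : s₀ ∈ S p := by simp only [hS, Set.mem_setOf_eq]; exact hs₀
      simp only [hfdef]
      rw [sInf_union_eq_of_exists hs₀S (by omega : s₀ ≤ t + 1),
        sInf_union_eq_of_exists hs₀S hs₀t]
    -- the independence step
    have hmain : (∫⁻ p, (if p ∈ A then c (Z t p + ξ t p.2) else 0) ∂ν)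
        = ∫⁻ p, (if p ∈ A then c (Z t p) else 0) ∂ν := by
      have hm1 : Measurable fun p : ℤ × Ω => if p ∈ A then c (Z t p + ξ t p.2) else 0 :=
        Measurable.ite hAm (hcm.comp ((hZm t).add ((hmξ t).comp measurable_snd)))
          measurable_const
      have hm2 : Measurable fun p : ℤ × Ω => if p ∈ A then c (Z t p) else 0 :=
        Measurable.ite hAm (hcm.comp (hZm t)) measurable_const
      rw [hν, lintegral_prod _ hm1.aemeasurable, lintegral_prod _ hm2.aemeasurable]
      refine lintegral_congr fun x => ?_
      set psum : (Fin t → ℤ) → ℕ → ℤ := fun w s => ∑ i : Fin t, if (i : ℕ) < s then w i else 0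
        with hpsum
      have hsum : ∀ (ω : Ω) (s : ℕ), s ≤ t →
          psum (fun i => ξ i ω) s = ∑ i ∈ Finset.range s, ξ i ω := by
        intro ω s hs
        simp only [hpsum]
        rw [Fin.sum_univ_eq_sum_range (fun i => if i < s then ξ i ω else 0) t,
          ← Finset.sum_filter]
        congr 1
        ext i
        simp only [Finset.mem_filter, Finset.mem_range]
        omega
      have hZt : ∀ ω : Ω, Z t (x, ω) = x + psum (fun i => ξ i ω) t := by
        intro ω
        rw [hsum ω t le_rfl]
        rfl
      set G : (Fin t → ℤ) → ℤ → ℝ≥0∞ := fun w e =>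
        if (∀ s ≤ t, (s, x + psum w s) ∈ D) then c (x + psum w t + e) else 0 with hG
      have hcond : ∀ ω : Ω, (∀ s ≤ t, (s, x + psum (fun i => ξ i ω) s) ∈ D) ↔ (x, ω) ∈ A := by
        intro ω
        simp only [hA, Set.mem_setOf_eq]
        refine forall_congr' fun s => imp_congr_right fun hs => ?_
        rw [hsum ω s hs]
        rfl
      have hGW : ∀ ω : Ω, G (fun i => ξ i ω) (ξ t ω)
          = if (x, ω) ∈ A then c (Z t (x, ω) + ξ t (x, ω).2) else 0 := by
        intro ω
        simp only [hG]
        by_cases hcA : (x, ω) ∈ A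
        · rw [if_pos ((hcond ω).mpr hcA), if_pos hcA, hZt ω]
        · rw [if_neg (fun hcc => hcA ((hcond ω).mp hcc)), if_neg hcA]
      have hGW1 : ∀ ω : Ω, (G (fun i => ξ i ω) 1 + G (fun i => ξ i ω) (-1)) / 2
          = if (x, ω) ∈ A then c (Z t (x, ω)) else 0 := by
        intro ω
        simp only [hG]
        by_cases hcA : (x, ω) ∈ A
        · rw [if_pos ((hcond ω).mpr hcA), if_pos ((hcond ω).mpr hcA), if_pos hcA, hZt ω]
          have hmem := ((hcond ω).mpr hcA) t le_rfl
          have hmz : x + psum (fun i => ξ i ω) t ≠ z := fun hmz => hzD (hmz ▸ hmem)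
          rw [hcoin _ hmz, mul_comm (2 : ℝ≥0∞), mul_div_assoc,
            ENNReal.div_self two_ne_zero ENNReal.ofNat_ne_top, mul_one]
        · rw [if_neg (fun hcc => hcA ((hcond ω).mp hcc)),
            if_neg (fun hcc => hcA ((hcond ω).mp hcc)), if_neg hcA]
          simp
      calc (∫⁻ ω, (if (x, ω) ∈ A then c (Z t (x, ω) + ξ t (x, ω).2) else 0) ∂P)
          = ∫⁻ ω, G (fun i => ξ i ω) (ξ t ω) ∂P := lintegral_congr fun ω => (hGW ω).symm
        _ = ∫⁻ ω, (G (fun i => ξ i ω) 1 + G (fun i => ξ i ω) (-1)) / 2 ∂P :=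
            lintegral_pair h t G
        _ = ∫⁻ ω, (if (x, ω) ∈ A then c (Z t (x, ω)) else 0) ∂P :=
            lintegral_congr fun ω => hGW1 ω
    have e1 : I (t + 1) = (∫⁻ p, (if p ∈ A then c (Z t p + ξ t p.2) else 0) ∂ν)
        + ∫⁻ p in Aᶜ, c (f t p) ∂ν := by
      simp only [hI]
      rw [← lintegral_add_compl (fun p => c (f (t + 1) p)) hAm]
      congr 1
      · rw [← lintegral_indicator hAm]
        refine lintegral_congr fun p => ?_
        rw [Set.indicator_apply]
        by_cases hp : p ∈ A
        · rw [if_pos hp, if_pos hp, hfA2 p hp]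
        · rw [if_neg hp, if_neg hp]
      · exact setLIntegral_congr_fun hAm.compl (fun p hp => by rw [hfnA p hp])
    have e2 : I t = (∫⁻ p, (if p ∈ A then c (Z t p) else 0) ∂ν)
        + ∫⁻ p in Aᶜ, c (f t p) ∂ν := by
      simp only [hI]
      rw [← lintegral_add_compl (fun p => c (f t p)) hAm]
      congr 1
      rw [← lintegral_indicator hAm]
      refine lintegral_congr fun p => ?_
      rw [Set.indicator_apply]
      by_cases hp : p ∈ A
      · rw [if_pos hp, if_pos hp, hfA1 p hp]
      · rw [if_neg hp, if_neg hp]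
    rw [e1, e2, hmain]
  have hconst : ∀ t, u ≤ t → I t = I u := by
    intro t htu
    induction t, htu using Nat.le_induction with
    | base => rfl
    | succ n hn ih => rw [hstep n hn, ih]
  -- Step 2: convergence
  set E : ℕ → Set (ℤ × Ω) := fun t => {p | ∃ s ≤ t, (s, Z s p) ∉ D} with hE
  have hEm : ∀ t, MeasurableSet (E t) := by
    intro t
    have he : E t = ⋃ s, ⋃ _ : s ≤ t, {p | s ∈ S p} := by
      ext p
      simp only [hE, hS, Set.mem_iUnion, Set.mem_setOf_eq, exists_prop]
    rw [he]
    exact MeasurableSet.iUnion fun s => MeasurableSet.iUnion fun _ => hSm s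
  have hEmono : Monotone E := by
    intro a b hab p hp
    obtain ⟨s, hs, h'⟩ := hp
    exact ⟨s, hs.trans hab, h'⟩
  have hfE : ∀ t, ∀ p ∈ E t, f t p = g p := by
    intro t p hp
    obtain ⟨s₀, hs₀t, hs₀⟩ := hp
    have hs₀S : s₀ ∈ S p := by simp only [hS, Set.mem_setOf_eq]; exact hs₀
    simp only [hfdef, hgdef]
    rw [sInf_union_eq_of_exists hs₀S hs₀t]
  have hfnE : ∀ t, ∀ p ∉ E t, f t p = Z t p := by
    intro t p hp
    have hfor : ∀ s, s < t → s ∉ S p := fun s hs hsS => hp ⟨s, le_of_lt hs, hsS⟩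
    simp only [hfdef]
    rw [sInf_union_eq_of_forall hfor]
  have hdecomp : ∀ t, I t = (∫⁻ p, (E t).indicator (fun p => c (g p)) p ∂ν)
      + ∫⁻ p in (E t)ᶜ, c (Z t p) ∂ν := by
    intro t
    simp only [hI]
    rw [← lintegral_add_compl (fun p => c (f t p)) (hEm t)]
    congr 1
    · rw [lintegral_indicator (hEm t)]
      exact setLIntegral_congr_fun (hEm t) (fun p hp => by rw [hfE t p hp])
    · exact setLIntegral_congr_fun (hEm t).compl (fun p hp => by rw [hfnE t p hp])
  have hgc : Measurable fun p => c (g p) := hcm.comp hgm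
  have hT1mono : Monotone fun t => (E t).indicator fun p => c (g p) := fun a b hab =>
    Set.indicator_le_indicator_of_subset (hEmono hab) (fun _ => zero_le)
  have hsup : (∫⁻ p, ⨆ t, (E t).indicator (fun p => c (g p)) p ∂ν) = ∫⁻ p, c (g p) ∂ν := by
    refine lintegral_congr_ae ?_
    filter_upwards [hfin] with p hp
    obtain ⟨s, hs⟩ := hp
    have hpE : p ∈ E s := ⟨s, le_rfl, hs⟩
    apply le_antisymm
    · exact iSup_le fun t => Set.indicator_le_self' (fun _ _ => zero_le) p
    · calc c (g p) = (E s).indicator (fun p => c (g p)) p := (Set.indicator_of_mem hpE (fun p => c (g p))).symm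
        _ ≤ ⨆ t, (E t).indicator (fun p => c (g p)) p :=
            le_iSup (fun t => (E t).indicator (fun p => c (g p)) p) s
  have hT1 : Tendsto (fun t => ∫⁻ p, (E t).indicator (fun p => c (g p)) p ∂ν) atTop
      (𝓝 (∫⁻ p, c (g p) ∂ν)) := by
    have hmono2 : Monotone fun t => ∫⁻ p, (E t).indicator (fun p => c (g p)) p ∂ν :=
      fun a b hab => lintegral_mono fun p => hT1mono hab p
    have hts := tendsto_atTop_iSup hmono2
    rwa [← lintegral_iSup (fun t => hgc.indicator (hEm t)) hT1mono, hsup] at hts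
  have hnull : ν (⋂ t, (E t)ᶜ) = 0 := by
    have hae := hfin
    rw [MeasureTheory.ae_iff] at hae
    refine measure_mono_null ?_ hae
    intro p hp hex
    obtain ⟨s, hs⟩ := hex
    exact (Set.mem_iInter.mp hp s) ⟨s, le_rfl, hs⟩
  have hmeas0 : Tendsto (fun t => ν ((E t)ᶜ)) atTop (𝓝 0) := by
    have ht := tendsto_measure_iInter_atTop (μ := ν) (s := fun t => (E t)ᶜ)
      (fun t => (hEm t).compl.nullMeasurableSet)
      (fun a b hab => Set.compl_subset_compl.mpr (hEmono hab))
      ⟨0, measure_ne_top _ _⟩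
    rw [hnull] at ht
    exact ht
  obtain ⟨-, hunif, -⟩ := hUI
  have hbound : ∀ t, (∫⁻ p in (E t)ᶜ, c (Z t p) ∂ν)
      ≤ (z.natAbs : ℝ≥0∞) * ν ((E t)ᶜ)
        + eLpNorm (((E t)ᶜ).indicator
            (fun p : ℤ × Ω => ((walk ξ p.1 (hitBy D (walk ξ p.1) t p.2) p.2 : ℤ) : ℝ))) 1 ν := by
    intro t
    have hb0 : (∫⁻ p in (E t)ᶜ, c (Z t p) ∂ν) = ∫⁻ p in (E t)ᶜ, c (f t p) ∂ν :=
      (setLIntegral_congr_fun (hEm t).compl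
        (fun p hp => by rw [hfnE t p hp])).symm
    have hb1 : (∫⁻ p in (E t)ᶜ, c (f t p) ∂ν)
        ≤ ∫⁻ p in (E t)ᶜ, ((z.natAbs : ℝ≥0∞) + ((f t p).natAbs : ℝ≥0∞)) ∂ν := by
      refine lintegral_mono fun p => ?_
      simp only [hc]
      rw [← Nat.cast_add]
      exact Nat.cast_le.mpr (by omega)
    have hb2 : (∫⁻ p in (E t)ᶜ, ((z.natAbs : ℝ≥0∞) + ((f t p).natAbs : ℝ≥0∞)) ∂ν)
        = (z.natAbs : ℝ≥0∞) * ν ((E t)ᶜ) + ∫⁻ p in (E t)ᶜ, ((f t p).natAbs : ℝ≥0∞) ∂ν := by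
      rw [lintegral_add_left measurable_const, setLIntegral_const]
    have hb3 : (∫⁻ p in (E t)ᶜ, ((f t p).natAbs : ℝ≥0∞) ∂ν)
        = eLpNorm (((E t)ᶜ).indicator
            (fun p : ℤ × Ω => ((walk ξ p.1 (hitBy D (walk ξ p.1) t p.2) p.2 : ℤ) : ℝ))) 1 ν := by
      rw [eLpNorm_one_eq_lintegral_enorm, ← lintegral_indicator (hEm t).compl]
      refine lintegral_congr fun p => ?_
      by_cases hp : p ∈ (E t)ᶜ
      · rw [Set.indicator_of_mem hp, Set.indicator_of_mem hp]
        exact (enorm_int (f t p)).symm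
      · rw [Set.indicator_of_notMem hp, Set.indicator_of_notMem hp]
        simp
    rw [hb0]
    exact hb1.trans (le_of_eq (hb2.trans (by rw [hb3])))
  have hT2 : Tendsto (fun t => ∫⁻ p in (E t)ᶜ, c (Z t p) ∂ν) atTop (𝓝 0) := by
    rw [ENNReal.tendsto_nhds_zero]
    intro ε hε
    have hεne : ε ≠ 0 := hε.ne'
    have hrpos : 0 < min (ε / 2) 1 :=
      lt_min (ENNReal.div_pos hεne ENNReal.ofNat_ne_top) zero_lt_one
    have hrtop : min (ε / 2) 1 ≠ ∞ :=
      ((min_le_right _ _).trans_lt ENNReal.one_lt_top).ne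
    have hr : (0 : ℝ) < (min (ε / 2) 1).toReal := ENNReal.toReal_pos hrpos.ne' hrtop
    obtain ⟨δ, hδpos, hδ⟩ := hunif hr
    have hθpos : 0 < min (ENNReal.ofReal δ) (ε / (2 * ((z.natAbs : ℝ≥0∞) + 1))) :=
      lt_min (ENNReal.ofReal_pos.mpr hδpos)
        (ENNReal.div_pos hεne (ENNReal.mul_ne_top ENNReal.ofNat_ne_top
          (ENNReal.add_ne_top.mpr ⟨ENNReal.natCast_ne_top _, ENNReal.one_ne_top⟩)))
    filter_upwards [hmeas0.eventually_lt_const hθpos] with t ht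
    refine (hbound t).trans ?_
    have hν2 : ν ((E t)ᶜ) ≤ ε / (2 * ((z.natAbs : ℝ≥0∞) + 1)) :=
      (ht.trans_le (min_le_right _ _)).le
    have hν1 : ν ((E t)ᶜ) ≤ ENNReal.ofReal δ := (ht.trans_le (min_le_left _ _)).le
    have hb1 : (z.natAbs : ℝ≥0∞) * ν ((E t)ᶜ) ≤ ε / 2 := by
      have hdd : ε / (2 * ((z.natAbs : ℝ≥0∞) + 1)) = (ε / 2) / ((z.natAbs : ℝ≥0∞) + 1) := by
        rw [div_eq_mul_inv, div_eq_mul_inv, div_eq_mul_inv,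
          ENNReal.mul_inv (Or.inl two_ne_zero) (Or.inl ENNReal.ofNat_ne_top)]
        ring
      calc (z.natAbs : ℝ≥0∞) * ν ((E t)ᶜ)
          ≤ ((z.natAbs : ℝ≥0∞) + 1) * (ε / (2 * ((z.natAbs : ℝ≥0∞) + 1))) :=
            mul_le_mul' le_self_add hν2
        _ = ((z.natAbs : ℝ≥0∞) + 1) * ((ε / 2) / ((z.natAbs : ℝ≥0∞) + 1)) := by rw [hdd]
        _ ≤ ε / 2 := ENNReal.mul_div_le
    have hb2 : eLpNorm (((E t)ᶜ).indicator
        (fun p : ℤ × Ω => ((walk ξ p.1 (hitBy D (walk ξ p.1) t p.2) p.2 : ℤ) : ℝ))) 1 ν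
        ≤ ε / 2 := by
      have hδ' := hδ t ((E t)ᶜ) (hEm t).compl hν1
      refine le_trans hδ' ?_
      rw [ENNReal.ofReal_toReal hrtop]
      exact min_le_left _ _
    calc (z.natAbs : ℝ≥0∞) * ν ((E t)ᶜ) + eLpNorm (((E t)ᶜ).indicator
          (fun p : ℤ × Ω => ((walk ξ p.1 (hitBy D (walk ξ p.1) t p.2) p.2 : ℤ) : ℝ))) 1 ν
        ≤ ε / 2 + ε / 2 := add_le_add hb1 hb2
      _ = ε := ENNReal.add_halves ε
  have hdecT : Tendsto I atTop (𝓝 ((∫⁻ p, c (g p) ∂ν) + 0)) :=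
    Tendsto.congr (fun t => (hdecomp t).symm) (hT1.add hT2)
  have hconstT : Tendsto I atTop (𝓝 (I u)) := by
    refine Tendsto.congr' ?_ tendsto_const_nhds
    filter_upwards [Filter.eventually_ge_atTop u] with t ht
    exact (hconst t ht).symm
  have hfinal : (∫⁻ p, c (g p) ∂ν) + 0 = I u := tendsto_nhds_unique hdecT hconstT
  rw [add_zero] at hfinal
  calc (∫⁻ p, c (g p) ∂ν) = I u := hfinal
    _ = I T := (hconst T huT).symm
    _ = ∫⁻ p, c (f T p) ∂ν := by simp only [hI]

/-- if `z ∈ ℤ` satisfies `(u, z) ∉ D` for some `u ≤ T`, then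
`U_{μ^{Root}}(z) = U_{μ^{Root}_T}(z)`.  In particular, on the event `{τ* < T}` one has
`U_{μ^{Root}}(Y_{τ*}) = U_{μ^{Root}_T}(Y_{τ*})`. -/
theorem potential_agree_outside_barrier
    (P : Measure Ω) [IsProbabilityMeasure P] (ξ η : ℕ → Ω → ℤ)
    (h : IndepSSRWIncrements P ξ η)
    (D : Set (ℕ × ℤ)) (hD : IsRootCont D)
    (lam : Measure ℤ) [IsProbabilityMeasure lam] (hlam : FiniteFirstMoment lam)
    (T : ℕ) (y : ℤ)
    (hfin : ∀ᵐ p ∂(lam.prod P), ∃ t, (t, walk ξ p.1 t p.2) ∉ D)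
    (hUI : UniformIntegrable
      (fun (t : ℕ) (p : ℤ × Ω) => ((walk ξ p.1 (hitBy D (walk ξ p.1) t p.2) p.2 : ℤ) : ℝ))
      1 (lam.prod P))
    (z : ℤ) (hz : ∃ u : ℕ, u ≤ T ∧ (u, z) ∉ D) :
    potential (muRoot P ξ D lam) z = potential (muRootT P ξ D lam T) z ∧
    ∀ ω : Ω, revHitBy D (walk η y) T ω < T →
      potential (muRoot P ξ D lam) (walk η y (revHitBy D (walk η y) T ω) ω)
        = potential (muRootT P ξ D lam T) (walk η y (revHitBy D (walk η y) T ω) ω) := by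
  refine ⟨key_potential_eq P ξ η h D hD lam T hfin hUI z hz, fun ω hω => ?_⟩
  have hmem : revHitBy D (walk η y) T ω ∈ {t | (T - t, walk η y t ω) ∉ D} ∪ {T} :=
    Nat.sInf_mem ⟨T, Or.inr rfl⟩
  rcases hmem with hmem | hmem
  · exact key_potential_eq P ξ η h D hD lam T hfin hUI _
      ⟨T - revHitBy D (walk η y) T ω, Nat.sub_le _ _, hmem⟩
  · exact absurd hmem (by intro hc; rw [Set.mem_singleton_iff] at hc; omega)

end SwitchingIdentities
end
end

section
/- Let D̃ ⊆ ℝ_+ × ℝ be a Rost continuation set whose complement is a closed left-barrier (i.e. (t,x) ∉ D̃ and s < t imply (s,x) ∉ D̃, and the complement is closed), let W be a one-dimensional Brownian motion started at a point x with (u,x) ∈ D̃ for some u > 0, and let ρ := inf{t > 0 : (t, W_t) ∉ D̃}. Then for every deterministic time T̃ > 0: ℙ(ρ = T̃) = 0. -/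
open MeasureTheory ProbabilityTheory

noncomputable section

namespace SwitchingIdentities

variable {Ω : Type*} [MeasurableSpace Ω]

/-- `B` is a standard one-dimensional Brownian motion (indexed by `t : ℝ`, with the defining
properties imposed for nonnegative times): measurable marginals, `B_0 = 0`, continuous paths,
Gaussian increments `B_t − B_s ∼ N(0, t − s)` for `0 ≤ s ≤ t`, and independent increments. -/
def IsStandardBM (P : Measure Ω) (B : ℝ → Ω → ℝ) : Prop :=
  (∀ t, Measurable (B t)) ∧
  (∀ ω, B 0 ω = 0) ∧
  (∀ ω, Continuous fun t => B t ω) ∧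
  (∀ s t : ℝ, 0 ≤ s → s ≤ t →
    Measure.map (fun ω => B t ω - B s ω) P = gaussianReal 0 ((t - s).toNNReal)) ∧
  (∀ (n : ℕ) (ts : Fin (n + 1) → ℝ), Monotone ts → (∀ i, 0 ≤ ts i) →
    iIndepFun
      (fun (i : Fin n) ω => B (ts i.succ) ω - B (ts i.castSucc) ω) P)

section Aux
open Real Set NNReal ENNReal Filter Topology

def coreSet (n : ℕ) (s : ℝ) : Set (Fin n → ℝ) :=
  {y | ∀ m : Fin n, 0 < s + ∑ j ∈ Finset.Iic m, y j}

lemma coreSet_measurable (n : ℕ) (s : ℝ) : MeasurableSet (coreSet n s) := by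
  have : coreSet n s = ⋂ m : Fin n, {y | 0 < s + ∑ j ∈ Finset.Iic m, y j} := by
    ext y; simp [coreSet]
  rw [this]
  exact MeasurableSet.iInter fun m => measurableSet_lt measurable_const
    (measurable_const.add (Finset.measurable_sum _ fun j _ => measurable_pi_apply j))

lemma sum_Iic_zero {n : ℕ} (y : Fin (n+1) → ℝ) :
    ∑ j ∈ Finset.Iic (0 : Fin (n+1)), y j = y 0 := by
  have : Finset.Iic (0 : Fin (n+1)) = {0} := by
    ext j; simp [Fin.le_zero_iff]
  rw [this, Finset.sum_singleton]

lemma sum_Iic_succ {n : ℕ} (y : Fin (n+1) → ℝ) (m : Fin n) :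
    ∑ j ∈ Finset.Iic m.succ, y j = y 0 + ∑ j ∈ Finset.Iic m, y j.succ := by
  have h : Finset.Iic m.succ
      = insert (0 : Fin (n+1)) ((Finset.Iic m).map ⟨Fin.succ, Fin.succ_injective n⟩) := by
    ext j
    simp only [Finset.mem_Iic, Finset.mem_insert, Finset.mem_map, Function.Embedding.coeFn_mk]
    constructor
    · intro hj
      cases j using Fin.cases with
      | zero => exact Or.inl rfl
      | succ i => exact Or.inr ⟨i, Fin.succ_le_succ_iff.mp hj, rfl⟩
    · rintro (rfl | ⟨i, hi, rfl⟩)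
      · exact Fin.zero_le _
      · exact Fin.succ_le_succ_iff.mpr hi
  rw [h, Finset.sum_insert (by simp [Fin.succ_ne_zero, eq_comm]), Finset.sum_map]
  rfl

lemma mem_coreSet_succ {n : ℕ} (s : ℝ) (y : Fin (n+1) → ℝ) :
    y ∈ coreSet (n+1) s ↔ (0 < s + y 0 ∧ (fun j => y j.succ) ∈ coreSet n (s + y 0)) := by
  simp only [coreSet, Set.mem_setOf_eq]
  rw [Fin.forall_fin_succ]
  constructor
  · rintro ⟨h0, hs⟩
    rw [sum_Iic_zero] at h0
    refine ⟨h0, fun m => ?_⟩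
    have := hs m
    rw [sum_Iic_succ] at this
    linarith
  · rintro ⟨h0, hs⟩
    refine ⟨by rw [sum_Iic_zero]; exact h0, fun m => ?_⟩
    have := hs m
    rw [sum_Iic_succ]
    linarith

lemma telescope_rev : ∀ (N : ℕ) (G : Fin (N+2) → ℝ) (m : Fin (N+1)),
    ∑ j ∈ Finset.Iic m, (G (j.rev.succ) - G (j.rev.castSucc))
      = G (Fin.last (N+1)) - G (m.rev.castSucc) := by
  intro N
  induction N with
  | zero =>
    intro G m
    have hm : m = 0 := Fin.ext (by omega)
    subst hm
    rw [sum_Iic_zero (fun j : Fin 1 => G (j.rev.succ) - G (j.rev.castSucc))]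
    have e1 : ((0:Fin 1).rev.succ) = Fin.last 1 :=
      Fin.ext (by simp [Fin.val_rev])
    rw [e1]
  | succ N IH =>
    intro G m
    induction m using Fin.cases with
    | zero =>
      rw [sum_Iic_zero (fun j : Fin (N+2) => G (j.rev.succ) - G (j.rev.castSucc))]
      have e1 : ((0:Fin (N+2)).rev.succ) = Fin.last (N+2) :=
        Fin.ext (by simp [Fin.val_rev])
      rw [e1]
    | succ m' =>
      rw [sum_Iic_succ (fun j : Fin (N+2) => G (j.rev.succ) - G (j.rev.castSucc)) m']
      have hstep : ∀ j : Fin (N+1),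
          (fun j : Fin (N+2) => G (j.rev.succ) - G (j.rev.castSucc)) j.succ
          = (G ∘ Fin.castSucc) (j.rev.succ) - (G ∘ Fin.castSucc) (j.rev.castSucc) := by
        intro j
        simp only [Function.comp_apply]
        have e1 : (j.succ.rev.succ : Fin (N+3)) = Fin.castSucc (j.rev.succ) := by
          apply Fin.ext
          simp only [Fin.val_rev, Fin.val_succ, Fin.coe_castSucc]
          omega
        have e2 : (j.succ.rev.castSucc : Fin (N+3)) = Fin.castSucc (j.rev.castSucc) := by
          apply Fin.ext
          simp only [Fin.val_rev, Fin.val_succ, Fin.coe_castSucc]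
          omega
        rw [e1, e2]
      rw [Finset.sum_congr rfl (fun j _ => hstep j), IH (G ∘ Fin.castSucc) m']
      simp only [Function.comp_apply]
      have h1 : ((0:Fin (N+2)).rev.succ) = Fin.last (N+2) := by
        apply Fin.ext; simp [Fin.val_rev]
      have h2 : ((0:Fin (N+2)).rev.castSucc) = Fin.castSucc (Fin.last (N+1)) := by
        apply Fin.ext; simp [Fin.val_rev]
      have h3 : Fin.castSucc (m'.rev.castSucc) = (m'.succ.rev.castSucc : Fin (N+3)) := by
        apply Fin.ext
        simp only [Fin.val_rev, Fin.val_succ, Fin.coe_castSucc]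
        omega
      rw [h1, h2, h3]
      ring

lemma gauss_map_neg (v : ℝ≥0) :
    Measure.map (fun x : ℝ => -x) (gaussianReal 0 v) = gaussianReal 0 v := by
  have h := gaussianReal_map_const_mul (μ := 0) (v := v) (-1)
  have hv : (NNReal.mk ((-1:ℝ)^2) (sq_nonneg _)) = 1 := by
    ext; norm_num
  rw [hv, one_mul, mul_zero] at h
  rw [← h]
  congr 1
  ext x
  ring

lemma gauss_Ioi_le_half (v : ℝ≥0) : gaussianReal 0 v (Set.Ioi 0) ≤ 1/2 := by
  have hmap := gauss_map_neg v
  have h1 : gaussianReal 0 v (Set.Iio 0) = gaussianReal 0 v (Set.Ioi 0) := by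
    conv_rhs => rw [← hmap]
    rw [Measure.map_apply measurable_neg measurableSet_Ioi]
    congr 1
    ext y; simp
  have h2 : gaussianReal 0 v (Set.Ioi 0) + gaussianReal 0 v (Set.Iio 0)
      = gaussianReal 0 v (Set.Ioi 0 ∪ Set.Iio 0) := by
    rw [measure_union _ measurableSet_Iio]
    exact Set.disjoint_left.mpr fun a ha hb => absurd (lt_trans ha hb) (lt_irrefl (0:ℝ))
  have h3 : gaussianReal 0 v (Set.Ioi 0 ∪ Set.Iio 0) ≤ 1 := prob_le_one
  rw [h1] at h2
  have h4 := h2 ▸ h3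
  rw [ENNReal.le_div_iff_mul_le (by simp) (by simp)]
  calc gaussianReal 0 v (Set.Ioi 0) * 2
      = gaussianReal 0 v (Set.Ioi 0) + gaussianReal 0 v (Set.Ioi 0) := by ring
    _ ≤ 1 := h4

lemma half_eq : (1/2 : ENNReal) = ENNReal.ofReal (1/2) := by
  rw [ENNReal.ofReal_div_of_pos (by norm_num), ENNReal.ofReal_one, ENNReal.ofReal_ofNat]

lemma sqrt_two_pi_ge : (5/2 : ℝ) ≤ Real.sqrt (2 * π) := by
  rw [show (5/2:ℝ) = Real.sqrt ((5/2)^2) from (Real.sqrt_sq (by norm_num)).symm]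
  apply Real.sqrt_le_sqrt
  nlinarith [Real.pi_gt_d2]

lemma sqrt_pi_v_ge (v : ℝ≥0) : (5/2 : ℝ) * Real.sqrt v ≤ Real.sqrt (2 * π * v) := by
  rw [show (2*π*(v:ℝ)) = (2*π)*v by ring, Real.sqrt_mul (by positivity)]
  exact mul_le_mul_of_nonneg_right sqrt_two_pi_ge (Real.sqrt_nonneg _)

lemma integral_Ioi_x_exp (b : ℝ) (hb : 0 < b) :
    ∫ x in Set.Ioi (0:ℝ), x * Real.exp (-b * x^2) = (2*b)⁻¹ := by
  have A : ∀ x ∈ Set.Ici (0:ℝ), HasDerivAt (fun y => -(2*b)⁻¹ * Real.exp (-b*y^2))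
      (x * Real.exp (-b*x^2)) x := by
    intro x _
    have h1 := (((hasDerivAt_pow 2 x).const_mul (-b)).exp).const_mul (-(2*b)⁻¹)
    convert h1 using 1
    · rfl
    · rfl
    field_simp
    ring
  have B : Tendsto (fun y : ℝ => -(2*b)⁻¹ * Real.exp (-b*y^2)) atTop (𝓝 (-(2*b)⁻¹ * 0)) := by
    refine Tendsto.const_mul _ ?_
    refine Real.tendsto_exp_atBot.comp ?_
    exact (tendsto_pow_atTop two_ne_zero).const_mul_atTop_of_neg (neg_lt_zero.2 hb)
  have hint : IntegrableOn (fun x : ℝ => x * Real.exp (-b*x^2)) (Set.Ioi 0) :=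
    (integrable_mul_exp_neg_mul_sq hb).integrableOn
  have := integral_Ioi_of_hasDerivAt_of_tendsto' A hint B
  rw [this]
  norm_num

lemma gauss_abs_pos_le (v : ℝ≥0) (hv : v ≠ 0) :
    ∫⁻ x, ENNReal.ofReal (max x 0) ∂(gaussianReal 0 v) ≤ ENNReal.ofReal ((2/5) * Real.sqrt v) := by
  have hvpos : (0:ℝ) < v := by positivity
  set b : ℝ := (2*(v:ℝ))⁻¹ with hbdef
  have hb : 0 < b := by positivity
  set c : ℝ := (Real.sqrt (2*π*v))⁻¹ with hcdef
  have hc : 0 ≤ c := by positivity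
  have hpdf : ∀ x : ℝ, gaussianPDFReal 0 v x = c * Real.exp (-b * x^2) := by
    intro x
    unfold gaussianPDFReal
    rw [hcdef, hbdef]
    congr 1
    rw [sub_zero]
    congr 1
    field_simp
  -- reduce to real integral
  have hmeas : Measurable fun x : ℝ => ENNReal.ofReal (max x 0) :=
    (measurable_id.max measurable_const).ennreal_ofReal
  rw [gaussianReal_of_var_ne_zero 0 hv,
    lintegral_withDensity_eq_lintegral_mul volume (measurable_gaussianPDF 0 v) hmeas]
  have hpt : ∀ x : ℝ, (gaussianPDF 0 v * fun x => ENNReal.ofReal (max x 0)) x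
      = ENNReal.ofReal (c * max (x * Real.exp (-b * x^2)) 0) := by
    intro x
    simp only [Pi.mul_apply, gaussianPDF, hpdf x]
    rw [← ENNReal.ofReal_mul (by positivity)]
    congr 1
    rw [mul_assoc, mul_comm (Real.exp _), max_mul_of_nonneg _ _ (Real.exp_pos _).le, zero_mul]
  rw [lintegral_congr hpt]
  have hintf : Integrable (fun x : ℝ => c * max (x * Real.exp (-b * x^2)) 0) :=
    ((integrable_mul_exp_neg_mul_sq hb).pos_part).const_mul c
  rw [← ofReal_integral_eq_lintegral_ofReal hintf
    (Filter.Eventually.of_forall fun x => by positivity)]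
  apply ENNReal.ofReal_le_ofReal
  have hsplit : ∫ x : ℝ, c * max (x * Real.exp (-b * x^2)) 0
      = c * ∫ x : ℝ, max (x * Real.exp (-b * x^2)) 0 := integral_const_mul _ _
  rw [hsplit]
  have hIic : ∫ x in Set.Iic (0:ℝ), max (x * Real.exp (-b * x^2)) 0 = 0 := by
    rw [setIntegral_congr_fun measurableSet_Iic (g := fun _ => (0:ℝ))]
    · simp
    · intro x hx
      simp only
      rw [max_eq_right]
      exact mul_nonpos_of_nonpos_of_nonneg hx (Real.exp_pos _).le
  have hIoi : ∫ x in Set.Ioi (0:ℝ), max (x * Real.exp (-b * x^2)) 0 = (2*b)⁻¹ := by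
    rw [setIntegral_congr_fun measurableSet_Ioi (g := fun x => x * Real.exp (-b * x^2))]
    · exact integral_Ioi_x_exp b hb
    · intro x hx
      simp only
      rw [max_eq_left]
      exact mul_nonneg (le_of_lt hx) (Real.exp_pos _).le
  have hint2 : Integrable (fun x : ℝ => max (x * Real.exp (-b * x^2)) 0) :=
    (integrable_mul_exp_neg_mul_sq hb).pos_part
  have htot : ∫ x : ℝ, max (x * Real.exp (-b * x^2)) 0 = (2*b)⁻¹ := by
    rw [← intervalIntegral.integral_Iic_add_Ioi (b := (0:ℝ)) hint2.integrableOn hint2.integrableOn, hIic, hIoi,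
      zero_add]
  rw [htot]
  have h2b : (2*b)⁻¹ = (v:ℝ) := by
    rw [hbdef]
    field_simp
  rw [h2b]
  -- c * v ≤ (2/5) * sqrt v
  have h1 : (5/2 : ℝ) * Real.sqrt v ≤ Real.sqrt (2 * π * v) := sqrt_pi_v_ge v
  have hsv : (0:ℝ) < Real.sqrt v := Real.sqrt_pos.mpr hvpos
  have h2 : c ≤ ((5/2 : ℝ) * Real.sqrt v)⁻¹ := by
    rw [hcdef]
    exact inv_anti₀ (by positivity) h1
  have h3 : ((5/2 : ℝ) * Real.sqrt v)⁻¹ * (v:ℝ) = (2/5) * Real.sqrt v := by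
    rw [mul_inv, show ((5/2:ℝ))⁻¹ = (2/5:ℝ) by norm_num, mul_assoc,
      mul_comm (Real.sqrt (v:ℝ))⁻¹, ← div_eq_mul_inv, Real.div_sqrt]
  calc c * (v:ℝ) ≤ ((5/2 : ℝ) * Real.sqrt v)⁻¹ * (v:ℝ) :=
      mul_le_mul_of_nonneg_right h2 hvpos.le
    _ = (2/5) * Real.sqrt v := h3

lemma gauss_shift_le (v : ℝ≥0) (hv : v ≠ 0) (s : ℝ) :
    gaussianReal 0 v {x | 0 < s + x} ≤ ENNReal.ofReal (1/2 + (2/5) * max s 0 / Real.sqrt v) := by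
  have hvpos : (0:ℝ) < v := by positivity
  have hsv : (0:ℝ) < Real.sqrt v := Real.sqrt_pos.mpr hvpos
  have hset : {x : ℝ | 0 < s + x} = Set.Ioi (-s) := by
    ext y; simp only [Set.mem_setOf_eq, Set.mem_Ioi]; constructor <;> intro h <;> linarith
  rw [hset]
  rcases le_or_gt s 0 with hs | hs
  · calc gaussianReal 0 v (Set.Ioi (-s)) ≤ gaussianReal 0 v (Set.Ioi 0) :=
          measure_mono (Set.Ioi_subset_Ioi (by linarith))
      _ ≤ 1/2 := gauss_Ioi_le_half v
      _ ≤ ENNReal.ofReal (1/2 + (2/5) * max s 0 / Real.sqrt v) := by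
          rw [half_eq]
          apply ENNReal.ofReal_le_ofReal
          have : 0 ≤ (2/5) * max s 0 / Real.sqrt v := by positivity
          linarith
  · have hsplit : Set.Ioi (-s) = Set.Ioc (-s) 0 ∪ Set.Ioi 0 :=
      (Set.Ioc_union_Ioi_eq_Ioi (by linarith)).symm
    rw [hsplit]
    have hIoc : gaussianReal 0 v (Set.Ioc (-s) 0) ≤ ENNReal.ofReal ((2/5) * s / Real.sqrt v) := by
      rw [gaussianReal_apply 0 hv]
      calc ∫⁻ x in Set.Ioc (-s) 0, gaussianPDF 0 v x
          ≤ ∫⁻ _ in Set.Ioc (-s) 0, ENNReal.ofReal ((Real.sqrt (2*π*v))⁻¹) := by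
            apply lintegral_mono
            intro y
            apply ENNReal.ofReal_le_ofReal
            unfold gaussianPDFReal
            have hexp : Real.exp (-(y-0)^2/(2*v)) ≤ 1 := by
              rw [Real.exp_le_one_iff]
              exact div_nonpos_of_nonpos_of_nonneg (neg_nonpos.mpr (sq_nonneg _)) (by positivity)
            have hinv : (0:ℝ) ≤ (Real.sqrt (2*π*v))⁻¹ := by positivity
            calc (Real.sqrt (2*π*v))⁻¹ * Real.exp (-(y-0)^2/(2*v))
                ≤ (Real.sqrt (2*π*v))⁻¹ * 1 := by
                  exact mul_le_mul_of_nonneg_left hexp hinv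
              _ = (Real.sqrt (2*π*v))⁻¹ := mul_one _
        _ = ENNReal.ofReal ((Real.sqrt (2*π*v))⁻¹) * volume (Set.Ioc (-s) 0) :=
            setLIntegral_const _ _
        _ = ENNReal.ofReal ((Real.sqrt (2*π*v))⁻¹) * ENNReal.ofReal s := by
            rw [Real.volume_Ioc]
            norm_num
        _ = ENNReal.ofReal ((Real.sqrt (2*π*v))⁻¹ * s) := by
            rw [ENNReal.ofReal_mul (by positivity)]
        _ ≤ ENNReal.ofReal ((2/5) * s / Real.sqrt v) := by
            apply ENNReal.ofReal_le_ofReal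
            have h1 : (5/2 : ℝ) * Real.sqrt v ≤ Real.sqrt (2 * π * v) := sqrt_pi_v_ge v
            have h2 : (Real.sqrt (2*π*v))⁻¹ ≤ ((5/2 : ℝ) * Real.sqrt v)⁻¹ := by
              apply inv_anti₀ (by positivity) h1
            have h3 : ((5/2 : ℝ) * Real.sqrt v)⁻¹ = (2/5) / Real.sqrt v := by
              field_simp
            rw [h3] at h2
            calc (Real.sqrt (2*π*v))⁻¹ * s ≤ ((2/5) / Real.sqrt v) * s :=
                mul_le_mul_of_nonneg_right h2 hs.le
              _ = 2/5 * s / Real.sqrt v := by ring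
    calc gaussianReal 0 v (Set.Ioc (-s) 0 ∪ Set.Ioi 0)
        ≤ gaussianReal 0 v (Set.Ioc (-s) 0) + gaussianReal 0 v (Set.Ioi 0) := measure_union_le _ _
      _ ≤ ENNReal.ofReal ((2/5) * s / Real.sqrt v) + 1/2 := by
          exact add_le_add hIoc (gauss_Ioi_le_half v)
      _ = ENNReal.ofReal ((2/5) * s / Real.sqrt v) + ENNReal.ofReal (1/2) := by rw [half_eq]
      _ = ENNReal.ofReal ((2/5) * s / Real.sqrt v + 1/2) := by
          rw [ENNReal.ofReal_add (by positivity) (by norm_num)]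
      _ ≤ ENNReal.ofReal (1/2 + (2/5) * max s 0 / Real.sqrt v) := by
          apply ENNReal.ofReal_le_ofReal
          rw [max_eq_left hs.le]
          linarith

lemma gauss_pospart_le (v : ℝ≥0) (hv : v ≠ 0) (s : ℝ) :
    ∫⁻ x, ENNReal.ofReal (max (s + x) 0) ∂(gaussianReal 0 v)
      ≤ ENNReal.ofReal (max s 0 + (2/5) * Real.sqrt v) := by
  calc ∫⁻ x, ENNReal.ofReal (max (s + x) 0) ∂(gaussianReal 0 v)
      ≤ ∫⁻ x, (ENNReal.ofReal (max s 0) + ENNReal.ofReal (max x 0)) ∂(gaussianReal 0 v) := by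
        apply lintegral_mono
        intro y
        calc ENNReal.ofReal (max (s + y) 0) ≤ ENNReal.ofReal (max s 0 + max y 0) := by
              apply ENNReal.ofReal_le_ofReal
              rcases le_total (s + y) 0 with h | h
              · rw [max_eq_right h]
                positivity
              · rw [max_eq_left h]
                exact add_le_add (le_max_left _ _) (le_max_left _ _)
          _ ≤ ENNReal.ofReal (max s 0) + ENNReal.ofReal (max y 0) := ENNReal.ofReal_add_le
    _ = ENNReal.ofReal (max s 0) + ∫⁻ x, ENNReal.ofReal (max x 0) ∂(gaussianReal 0 v) := by
        rw [lintegral_add_left measurable_const, lintegral_const, measure_univ, mul_one]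
    _ ≤ ENNReal.ofReal (max s 0) + ENNReal.ofReal ((2/5) * Real.sqrt v) :=
        add_le_add (le_refl _) (gauss_abs_pos_le v hv)
    _ = ENNReal.ofReal (max s 0 + (2/5) * Real.sqrt v) := by
        rw [ENNReal.ofReal_add (le_max_right _ _) (by positivity)]

lemma coreSet_bound : ∀ (n : ℕ) (V : Fin n → ℝ≥0), (∀ j, V j ≠ 0) → ∀ (σ0 : ℝ), 0 < σ0 →
    (∀ j : Fin n, (j:ℕ) = 0 → σ0 ≤ Real.sqrt (V j)) →
    (∀ j k : Fin n, (j:ℕ)+1 = (k:ℕ) → (5/2) * Real.sqrt (V j) ≤ Real.sqrt (V k)) →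
    ∀ s : ℝ,
    Measure.pi (fun j => gaussianReal 0 (V j)) (coreSet n s) ≤
      ENNReal.ofReal ((9/10)^n * (1 + max s 0 / σ0)) := by
  intro n
  induction n with
  | zero =>
    intro V hV σ0 hσ0 h0 hg s
    have hu : coreSet 0 s = Set.univ := by
      ext y; constructor
      · intro _; trivial
      · intro _ m; exact m.elim0
    rw [hu, measure_univ, ← ENNReal.ofReal_one]
    apply ENNReal.ofReal_le_ofReal
    have h1 : 0 ≤ max s 0 / σ0 := by positivity
    nlinarith
  | succ n IH =>
    intro V hV σ0 hσ0 h0 hg s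
    have hV0 : (0:ℝ) < (V 0 : ℝ) := by
      have := hV 0; positivity
    set t : ℝ := Real.sqrt (V 0) with htdef
    have ht : 0 < t := Real.sqrt_pos.mpr hV0
    set K : ℝ := (9/10)^n with hKdef
    have hK : 0 < K := by positivity
    set μ0 := gaussianReal 0 (V 0) with hμ0def
    set ν := Measure.pi (fun j : Fin n => gaussianReal 0 (V j.succ)) with hνdef
    haveI : IsProbabilityMeasure ν := by rw [hνdef]; infer_instance
    set S : Set (ℝ × (Fin n → ℝ)) :=
      {p | 0 < s + p.1} ∩ ⋂ m : Fin n, {p | 0 < (s + p.1) + ∑ j ∈ Finset.Iic m, p.2 j} with hSdef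
    have hmem : ∀ p : ℝ × (Fin n → ℝ), p ∈ S ↔ (0 < s + p.1 ∧ p.2 ∈ coreSet n (s + p.1)) := by
      intro p
      simp [hSdef, coreSet, Set.mem_iInter]
    have hSmeas : MeasurableSet S := by
      apply MeasurableSet.inter
      · exact measurableSet_lt measurable_const (measurable_const.add measurable_fst)
      · exact MeasurableSet.iInter fun m => measurableSet_lt measurable_const
          ((measurable_const.add measurable_fst).add
            (Finset.measurable_sum _ fun j _ => (measurable_pi_apply j).comp measurable_snd))
    have hpres := measurePreserving_piFinSuccAbove (fun j : Fin (n+1) => gaussianReal 0 (V j)) 0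
    have hνeq : (fun j : Fin n => gaussianReal 0 (V ((0 : Fin (n+1)).succAbove j))) =
        (fun j : Fin n => gaussianReal 0 (V j.succ)) := by
      funext j
      rw [Fin.succAbove_zero]
    rw [hνeq] at hpres
    have hpre : Measure.pi (fun j : Fin (n+1) => gaussianReal 0 (V j)) (coreSet (n+1) s)
        = (μ0.prod ν) S := by
      rw [← hpres.measure_preimage hSmeas.nullMeasurableSet]
      congr 1
      ext y
      rw [Set.mem_preimage, MeasurableEquiv.piFinSuccAbove_apply, hmem]
      exact mem_coreSet_succ s y
    rw [hpre, Measure.prod_apply hSmeas]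
    set c2 : ℝ≥0∞ := ENNReal.ofReal (K / ((5/2) * t)) with hc2def
    have hptb : ∀ x : ℝ, ν (Prod.mk x ⁻¹' S)
        ≤ Set.indicator {x : ℝ | 0 < s + x} (fun _ => ENNReal.ofReal K) x
          + c2 * ENNReal.ofReal (max (s + x) 0) := by
      intro x
      by_cases hx : 0 < s + x
      · have hxset : Prod.mk x ⁻¹' S = coreSet n (s + x) := by
          ext z
          rw [Set.mem_preimage, hmem]
          simp [hx]
        rw [hxset]
        have hIH := IH (fun j => V j.succ) (fun j => hV j.succ) ((5/2) * t) (by positivity)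
          (fun j hj => by
            have h1 : ((0 : Fin (n+1)) : ℕ) + 1 = (j.succ : ℕ) := by simp [hj]
            exact hg 0 j.succ h1)
          (fun j k hjk => hg j.succ k.succ (by simp only [Fin.val_succ]; omega))
          (s + x)
        calc ν (coreSet n (s + x)) ≤ ENNReal.ofReal (K * (1 + max (s+x) 0 / ((5/2) * t))) := hIH
          _ ≤ Set.indicator {x : ℝ | 0 < s + x} (fun _ => ENNReal.ofReal K) x
              + c2 * ENNReal.ofReal (max (s + x) 0) := by
            have he : K * (1 + max (s+x) 0 / ((5/2) * t))
                = K + (K / ((5/2) * t)) * max (s+x) 0 := by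
              field_simp
            rw [he]
            calc ENNReal.ofReal (K + (K / ((5/2) * t)) * max (s+x) 0)
                ≤ ENNReal.ofReal K + ENNReal.ofReal ((K / ((5/2) * t)) * max (s+x) 0) :=
                  ENNReal.ofReal_add_le
              _ = Set.indicator {x : ℝ | 0 < s + x} (fun _ => ENNReal.ofReal K) x
                  + c2 * ENNReal.ofReal (max (s + x) 0) := by
                rw [Set.indicator_of_mem (by exact hx), ENNReal.ofReal_mul (by positivity)]
      · have hxset : Prod.mk x ⁻¹' S = ∅ := by
          ext z
          rw [Set.mem_preimage, hmem]
          simp [hx]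
        rw [hxset]
        simp
    have hset : MeasurableSet {x : ℝ | 0 < s + x} :=
      measurableSet_lt measurable_const (measurable_const.add measurable_id)
    have hmeas2 : Measurable fun x : ℝ => ENNReal.ofReal (max (s + x) 0) :=
      (((measurable_const.add measurable_id).max measurable_const)).ennreal_ofReal
    have hσt : σ0 ≤ t := h0 0 rfl
    calc ∫⁻ x, ν (Prod.mk x ⁻¹' S) ∂μ0
        ≤ ∫⁻ x, (Set.indicator {x : ℝ | 0 < s + x} (fun _ => ENNReal.ofReal K) x
            + c2 * ENNReal.ofReal (max (s + x) 0)) ∂μ0 := lintegral_mono hptb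
      _ = ENNReal.ofReal K * μ0 {x : ℝ | 0 < s + x}
          + c2 * ∫⁻ x, ENNReal.ofReal (max (s + x) 0) ∂μ0 := by
        rw [lintegral_add_left (measurable_const.indicator hset),
          lintegral_indicator_const hset, lintegral_const_mul _ hmeas2]
      _ ≤ ENNReal.ofReal K * ENNReal.ofReal (1/2 + (2/5) * max s 0 / t)
          + c2 * ENNReal.ofReal (max s 0 + (2/5) * t) := by
        exact add_le_add (mul_le_mul_right (gauss_shift_le (V 0) (hV 0) s) _)
          (mul_le_mul_right (gauss_pospart_le (V 0) (hV 0) s) _)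
      _ = ENNReal.ofReal (K * (1/2 + (2/5) * max s 0 / t)
          + (K / ((5/2) * t)) * (max s 0 + (2/5) * t)) := by
        rw [← ENNReal.ofReal_mul hK.le, ← ENNReal.ofReal_mul (by positivity),
          ← ENNReal.ofReal_add (by positivity) (by positivity)]
      _ ≤ ENNReal.ofReal ((9/10)^(n+1) * (1 + max s 0 / σ0)) := by
        apply ENNReal.ofReal_le_ofReal
        set u : ℝ := max s 0 with hudef
        have hu : 0 ≤ u := le_max_right _ _
        have e1 : K/((5/2)*t)*(u + (2/5)*t) = (2/5)*K*(u/t) + (4/25)*K := by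
          field_simp
          ring
        have e2 : K*(1/2 + (2/5)*u/t) = K/2 + (2/5)*K*(u/t) := by ring
        have e3 : (9/10:ℝ)^(n+1) = (9/10)*K := by rw [hKdef, pow_succ]; ring
        have hdiv : u/t ≤ u/σ0 := by gcongr
        have h5 : (2/5)*K*(u/t) ≤ (2/5)*K*(u/σ0) := by
          apply mul_le_mul_of_nonneg_left hdiv (by positivity)
        have h6 : 0 ≤ K*(u/σ0) := mul_nonneg hK.le (div_nonneg hu hσ0.le)
        rw [e1, e2, e3]
        nlinarith [h5, h6, hK]

lemma map_fin_eq_pi {n : ℕ} (P : Measure Ω) [IsProbabilityMeasure P] (f : Fin n → Ω → ℝ)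
    (hf : ∀ i, Measurable (f i))
    (hind : iIndepFun f P)
    (μ : Fin n → Measure ℝ) (hμ : ∀ i, Measure.map (f i) P = μ i) :
    Measure.map (fun ω i => f i ω) P = Measure.pi μ := by
  haveI : ∀ i, IsProbabilityMeasure (μ i) := fun i => by
    rw [← hμ i]; exact Measure.isProbabilityMeasure_map (hf i).aemeasurable
  refine (Measure.pi_eq fun s hs => ?_).symm
  rw [Measure.map_apply (measurable_pi_lambda _ fun i => hf i) (MeasurableSet.univ_pi hs)]
  have hpre : (fun ω i => f i ω) ⁻¹' (Set.univ.pi s) = ⋂ i ∈ Finset.univ, f i ⁻¹' s i := by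
    ext ω; simp [Set.mem_univ_pi]
  rw [hpre, hind.measure_inter_preimage_eq_mul Finset.univ (sets := s) (fun i _ => hs i)]
  exact Finset.prod_congr rfl fun i _ => by
    rw [← hμ i, Measure.map_apply (hf i) (hs i)]

lemma iIndepFun_reindex {n : ℕ} (e : Fin n ≃ Fin n) (f : Fin n → Ω → ℝ) {P : Measure Ω}
    (h : iIndepFun f P) :
    iIndepFun (fun i => f (e i)) P := by
  rw [iIndepFun_iff_measure_inter_preimage_eq_mul] at h ⊢
  intro S sets hsets
  have key := h (S.map e.toEmbedding) (sets := fun i => sets (e.symm i))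
    (fun i hi => by
      rw [Finset.mem_map_equiv] at hi
      exact hsets _ hi)
  have h1 : (⋂ i ∈ S.map e.toEmbedding, f i ⁻¹' sets (e.symm i)) = ⋂ j ∈ S, f (e j) ⁻¹' sets j := by
    ext ω
    simp only [Set.mem_iInter, Finset.mem_map_equiv]
    constructor
    · intro H j hj
      have := H (e j) (by simpa using hj)
      simpa using this
    · intro H i hi
      have := H (e.symm i) hi
      simpa [Equiv.apply_symm_apply] using this
  have h2 : ∏ i ∈ S.map e.toEmbedding, P (f i ⁻¹' sets (e.symm i))
      = ∏ j ∈ S, P (f (e j) ⁻¹' sets j) := by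
    rw [Finset.prod_map]
    exact Finset.prod_congr rfl fun j _ => by simp
  rw [h1, h2] at key
  exact key

end Aux

/-- let `R ⊆ ℝ₊ × ℝ` be a closed left-barrier (the complement of a Rost
continuation set `D̃`), let `W = x + B` be a Brownian motion started at `x` with
`(u, x) ∉ R` for some `u > 0`, and let `ρ = inf{t > 0 : (t, W_t) ∈ R}`.  Then for every
deterministic `T̃ > 0`, `ℙ(ρ = T̃) = 0`. -/
theorem rost_hitting_time_no_atom
    (P : Measure Ω) [IsProbabilityMeasure P]
    (B : ℝ → Ω → ℝ) (hB : IsStandardBM P B)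
    (R : Set (ℝ × ℝ)) (hRclosed : IsClosed R) (hRpos : ∀ p ∈ R, 0 ≤ p.1)
    (hRbar : ∀ t xx : ℝ, (t, xx) ∈ R → ∀ s : ℝ, 0 ≤ s → s < t → (s, xx) ∈ R)
    (x : ℝ) (hx : ∃ u : ℝ, 0 < u ∧ (u, x) ∉ R)
    (ρ : Ω → ℝ) (hρ : ∀ ω, ρ ω = sInf {t : ℝ | 0 < t ∧ (t, x + B t ω) ∈ R})
    (Ttil : ℝ) (hT : 0 < Ttil) :
    P {ω | ρ ω = Ttil} = 0 := by
  classical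
  obtain ⟨hBmeas, hB0, hBcont, hBlaw, hBind⟩ := hB
  suffices hn : ∀ n : ℕ, P {ω | ρ ω = Ttil} ≤ ENNReal.ofReal (2 * (9/10)^(n+1)) by
    have h0 : Filter.Tendsto (fun n : ℕ => ((9:ℝ)/10)^n) Filter.atTop (nhds 0) :=
      tendsto_pow_atTop_nhds_zero_of_lt_one (by norm_num) (by norm_num)
    have h1 : Filter.Tendsto (fun n : ℕ => (2:ℝ) * (9/10)^(n+1)) Filter.atTop (nhds 0) := by
      have h2 := h0.const_mul (2 * (9/10 : ℝ))
      rw [mul_zero] at h2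
      convert h2 using 2 with n
      rw [pow_succ]
      ring
    have h3 : Filter.Tendsto (fun n : ℕ => ENNReal.ofReal (2*(9/10)^(n+1)))
        Filter.atTop (nhds 0) := by
      rw [← ENNReal.ofReal_zero]
      exact ENNReal.tendsto_ofReal h1
    have h4 : P {ω | ρ ω = Ttil} ≤ 0 := ge_of_tendsto' h3 hn
    exact le_antisymm h4 zero_le
  intro n
  -- the grid of times
  set τ : Fin (n+2) → ℝ :=
    fun i => if (i:ℕ) = n+1 then Ttil else Ttil * (1 - (9:ℝ)⁻¹ ^ ((i:ℕ)+1)) with hτdef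
  have hq1 : ∀ k : ℕ, 0 < (9:ℝ)⁻¹ ^ k := fun k => by positivity
  have hq2 : ∀ k : ℕ, (9:ℝ)⁻¹ ^ (k+1) < 1 :=
    fun k => pow_lt_one₀ (by norm_num) (by norm_num) (by omega)
  have hτval : ∀ i : Fin (n+2), (i:ℕ) ≤ n → τ i = Ttil * (1 - (9:ℝ)⁻¹ ^ ((i:ℕ)+1)) := by
    intro i hi
    rw [hτdef]
    simp only
    rw [if_neg (by omega)]
  have hτtop : ∀ i : Fin (n+2), (i:ℕ) = n+1 → τ i = Ttil := by
    intro i hi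
    rw [hτdef]
    simp only
    rw [if_pos hi]
  have hτpos : ∀ i : Fin (n+2), (i:ℕ) ≤ n → 0 < τ i ∧ τ i < Ttil := by
    intro i hi
    rw [hτval i hi]
    constructor
    · have h1 := hq2 ((i:ℕ))
      have h2 := hq1 ((i:ℕ)+1)
      nlinarith
    · have h2 := hq1 ((i:ℕ)+1)
      nlinarith
  have hτmono_strict : ∀ i j : Fin (n+2), (i:ℕ) < (j:ℕ) → τ i < τ j := by
    intro i j hij
    rcases Nat.lt_or_ge (j:ℕ) (n+1) with hj | hj
    · rw [hτval i (by omega), hτval j (by omega)]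
      have hpw : (9:ℝ)⁻¹ ^ ((j:ℕ)+1) < (9:ℝ)⁻¹ ^ ((i:ℕ)+1) :=
        pow_lt_pow_right_of_lt_one₀ (by norm_num) (by norm_num) (by omega)
      nlinarith
    · have hj1 : (j:ℕ) = n+1 := by omega
      rw [hτtop j hj1]
      exact (hτpos i (by omega)).2
  have hτmono : Monotone τ := by
    intro i j hij
    rcases eq_or_lt_of_le hij with h | h
    · rw [h]
    · exact (hτmono_strict i j h).le
  have hτnonneg : ∀ i, 0 ≤ τ i := by
    intro i
    rcases Nat.lt_or_ge (i:ℕ) (n+1) with hi | hi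
    · exact (hτpos i (by omega)).1.le
    · rw [hτtop i (by omega)]
      exact hT.le
  -- reversed increments
  set e : Equiv.Perm (Fin (n+1)) := Fin.revPerm with hedef
  set g : Fin (n+1) → Ω → ℝ := fun i ω => B (τ i.succ) ω - B (τ i.castSucc) ω with hgdef
  set X : Fin (n+1) → Ω → ℝ := fun j => g (e j) with hXdef
  have hXmeas : ∀ j, Measurable (X j) := fun j => (hBmeas _).sub (hBmeas _)
  have hgind := hBind (n+1) τ hτmono hτnonneg
  have hXind : iIndepFun X P :=
    iIndepFun_reindex e g hgind
  -- variances
  set V : Fin (n+1) → NNReal := fun j => (τ (e j).succ - τ (e j).castSucc).toNNReal with hVdef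
  have hdiffpos : ∀ i : Fin (n+1), 0 < τ i.succ - τ i.castSucc := by
    intro i
    have h1 : ((i.castSucc : Fin (n+2)) : ℕ) < ((i.succ : Fin (n+2)) : ℕ) := by
      simp [Fin.val_succ]
    have := hτmono_strict i.castSucc i.succ h1
    linarith
  have hVcoe : ∀ j, (V j : ℝ) = τ (e j).succ - τ (e j).castSucc := fun j =>
    Real.coe_toNNReal _ (hdiffpos (e j)).le
  have hVne : ∀ j, V j ≠ 0 := by
    intro j hc
    have h1 := hVcoe j
    rw [hc] at h1
    have h2 := hdiffpos (e j)
    simp at h1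
    linarith
  have hrev_val : ∀ j : Fin (n+1), ((e j : Fin (n+1)) : ℕ) = n - (j:ℕ) := by
    intro j
    rw [hedef]
    simp only [Fin.revPerm_apply, Fin.val_rev]
    omega
  have hV0 : (V 0 : ℝ) = Ttil * (9:ℝ)⁻¹ ^ (n+1) := by
    rw [hVcoe]
    have h1 : ((Fin.succ (e 0) : Fin (n+2)) : ℕ) = n+1 := by
      rw [Fin.val_succ, hrev_val]
      simp
    have h2 : ((Fin.castSucc (e 0) : Fin (n+2)) : ℕ) = n := by
      rw [Fin.coe_castSucc, hrev_val]
      simp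
    rw [hτtop _ h1, hτval _ (by omega), h2]
    ring
  have hVpos_j : ∀ j : Fin (n+1), 1 ≤ (j:ℕ) →
      (V j : ℝ) = 8 * Ttil * (9:ℝ)⁻¹ ^ (n - (j:ℕ) + 2) := by
    intro j hj
    rw [hVcoe]
    have hjn : (j:ℕ) ≤ n := by omega
    have h1 : ((Fin.succ (e j) : Fin (n+2)) : ℕ) = n - (j:ℕ) + 1 := by
      rw [Fin.val_succ, hrev_val]
    have h2 : ((Fin.castSucc (e j) : Fin (n+2)) : ℕ) = n - (j:ℕ) := by
      rw [Fin.coe_castSucc, hrev_val]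
    rw [hτval _ (by omega), hτval _ (by omega), h1, h2]
    rw [show n - (j:ℕ) + 2 = (n - (j:ℕ) + 1) + 1 from rfl, pow_succ]
    ring
  have sqrt_gr : ∀ a b : ℝ, 0 ≤ a → (25/4)*a ≤ b → (5/2)*Real.sqrt a ≤ Real.sqrt b := by
    intro a b ha hab
    have h1 : Real.sqrt ((25/4)*a) ≤ Real.sqrt b := Real.sqrt_le_sqrt hab
    rwa [Real.sqrt_mul (by norm_num), show Real.sqrt (25/4 : ℝ) = 5/2 by
      rw [show (25/4:ℝ) = (5/2)^2 by norm_num, Real.sqrt_sq (by norm_num)]] at h1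
  have hgrow : ∀ j k : Fin (n+1), (j:ℕ)+1 = (k:ℕ) →
      (5/2)*Real.sqrt (V j) ≤ Real.sqrt (V k) := by
    intro j k hjk
    apply sqrt_gr _ _ (V j).coe_nonneg
    have hkn : (k:ℕ) ≤ n := by omega
    rcases Nat.eq_zero_or_pos (j:ℕ) with hj0 | hj0
    · have hj : j = 0 := Fin.ext (by simp [hj0])
      rw [hj, hV0, hVpos_j k (by omega)]
      have hke : n - (k:ℕ) + 2 = n + 1 := by omega
      rw [hke]
      have := hq1 (n+1)
      nlinarith
    · rw [hVpos_j j (by omega), hVpos_j k (by omega)]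
      have hk : n - (k:ℕ) + 2 + 1 = n - (j:ℕ) + 2 := by omega
      rw [← hk, pow_succ]
      have := hq1 (n - (k:ℕ) + 2)
      nlinarith
  -- laws
  have hXlaw : ∀ j, Measure.map (X j) P = gaussianReal 0 (V j) := fun j =>
    hBlaw (τ (Fin.castSucc (e j))) (τ (Fin.succ (e j))) (hτnonneg _)
      (hτmono (Fin.castSucc_le_succ _))
  -- joint laws
  set Φ : Ω → (Fin (n+1) → ℝ) := fun ω j => X j ω with hΦdef
  have hΦmeas : Measurable Φ := measurable_pi_lambda _ fun j => hXmeas j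
  have hmapΦ : Measure.map Φ P = Measure.pi (fun j => gaussianReal 0 (V j)) :=
    map_fin_eq_pi P X hXmeas hXind _ hXlaw
  set Y : Fin (n+1) → Ω → ℝ := fun j ω => -(X j ω) with hYdef
  have hYmeas : ∀ j, Measurable (Y j) := fun j => (hXmeas j).neg
  have hYind : iIndepFun Y P :=
    hXind.comp (fun _ => fun y : ℝ => -y) (fun _ => measurable_neg)
  have hYlaw : ∀ j, Measure.map (Y j) P = gaussianReal 0 (V j) := by
    intro j
    have h1 : Y j = (fun y : ℝ => -y) ∘ (X j) := rfl
    rw [h1, ← Measure.map_map measurable_neg (hXmeas j), hXlaw j, gauss_map_neg]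
  set Ψ : Ω → (Fin (n+1) → ℝ) := fun ω j => Y j ω with hΨdef
  have hΨmeas : Measurable Ψ := measurable_pi_lambda _ fun j => hYmeas j
  have hmapΨ : Measure.map Ψ P = Measure.pi (fun j => gaussianReal 0 (V j)) :=
    map_fin_eq_pi P Y hYmeas hYind _ hYlaw
  -- core bound
  have hσ0 : (0:ℝ) < Real.sqrt (V 0) := by
    apply Real.sqrt_pos.mpr
    rw [hV0]
    positivity
  have hcore := coreSet_bound (n+1) V hVne (Real.sqrt (V 0)) hσ0
    (fun j hj => by rw [show j = (0 : Fin (n+1)) from Fin.ext (by simp [hj])]) hgrow 0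
  have hbound : Measure.pi (fun j => gaussianReal 0 (V j)) (coreSet (n+1) 0)
      ≤ ENNReal.ofReal ((9/10 : ℝ)^(n+1)) := by
    simpa using hcore
  -- pathwise inclusion
  have hsubset : {ω | ρ ω = Ttil} ⊆ Φ ⁻¹' (coreSet (n+1) 0) ∪ Ψ ⁻¹' (coreSet (n+1) 0) := by
    intro ω hω
    simp only [Set.mem_setOf_eq] at hω
    have hWcont : Continuous (fun t : ℝ => x + B t ω) := continuous_const.add (hBcont ω)
    set Sτ : Set ℝ := {t : ℝ | 0 < t ∧ (t, x + B t ω) ∈ R} with hSτdef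
    have hωeq : sInf Sτ = Ttil := by rw [← hρ ω]; exact hω
    have hne : Sτ.Nonempty := by
      by_contra hc
      rw [Set.not_nonempty_iff_eq_empty] at hc
      rw [hc, Real.sInf_empty] at hωeq
      linarith
    have hbdd : BddBelow Sτ := ⟨0, fun t ht => ht.1.le⟩
    have hgeT : ∀ t ∈ Sτ, Ttil ≤ t := fun t ht => hωeq ▸ csInf_le hbdd ht
    have hclos : Ttil ∈ closure Sτ := hωeq ▸ csInf_mem_closure hne hbdd
    have hmemR : (Ttil, x + B Ttil ω) ∈ R := by
      have hsub : closure Sτ ⊆ (fun t => (t, x + B t ω)) ⁻¹' R :=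
        closure_minimal (fun t ht => ht.2) (hRclosed.preimage (continuous_id.prodMk hWcont))
      exact hsub hclos
    have hne2 : ∀ s, 0 < s → s < Ttil → x + B s ω ≠ x + B Ttil ω := by
      intro s hs hsT hc
      have h1 : (s, x + B Ttil ω) ∈ R := hRbar Ttil (x + B Ttil ω) hmemR s hs.le hsT
      rw [← hc] at h1
      have h2 : Ttil ≤ s := hgeT s ⟨hs, h1⟩
      linarith
    have hdich : (∀ s, 0 < s → s < Ttil → x + B s ω < x + B Ttil ω) ∨
        (∀ s, 0 < s → s < Ttil → x + B Ttil ω < x + B s ω) := by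
      by_contra hc
      push_neg at hc
      obtain ⟨⟨a, ha0, haT, ha⟩, ⟨b, hb0, hbT, hb⟩⟩ := hc
      have ha' : x + B Ttil ω < x + B a ω :=
        lt_of_le_of_ne ha (fun h => hne2 a ha0 haT h.symm)
      have hb' : x + B b ω < x + B Ttil ω := lt_of_le_of_ne hb (hne2 b hb0 hbT)
      have hmem : x + B Ttil ω ∈ Set.uIcc (x + B b ω) (x + B a ω) :=
        Set.mem_uIcc.mpr (Or.inl ⟨hb'.le, ha'.le⟩)
      obtain ⟨c, hc1, hc2⟩ := intermediate_value_uIcc hWcont.continuousOn hmem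
      have hc0 : 0 < c ∧ c < Ttil := by
        rcases Set.mem_uIcc.mp hc1 with ⟨h1, h2⟩ | ⟨h1, h2⟩ <;> constructor <;> linarith
      exact hne2 c hc0.1 hc0.2 hc2
    have htel : ∀ m : Fin (n+1), ∑ j ∈ Finset.Iic m, X j ω
        = B Ttil ω - B (τ (Fin.castSucc (Fin.rev m))) ω := by
      intro m
      have h1 := telescope_rev n (fun i : Fin (n+2) => B (τ i) ω) m
      have h2 : ∀ j : Fin (n+1), X j ω
          = (fun i : Fin (n+2) => B (τ i) ω) (Fin.succ (Fin.rev j))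
            - (fun i : Fin (n+2) => B (τ i) ω) (Fin.castSucc (Fin.rev j)) := fun j => rfl
      rw [Finset.sum_congr rfl (fun j _ => h2 j), h1]
      have h3 : τ (Fin.last (n+1)) = Ttil := hτtop _ (by simp)
      rw [h3]
    have hθ : ∀ m : Fin (n+1),
        0 < τ (Fin.castSucc (Fin.rev m)) ∧ τ (Fin.castSucc (Fin.rev m)) < Ttil := by
      intro m
      apply hτpos
      rw [Fin.coe_castSucc, Fin.val_rev]
      omega
    rcases hdich with hL | hR
    · left
      intro m
      have h4 := hL (τ (Fin.castSucc (Fin.rev m))) (hθ m).1 (hθ m).2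
      have h5 : (0:ℝ) < B Ttil ω - B (τ (Fin.castSucc (Fin.rev m))) ω := by linarith
      show 0 < 0 + ∑ j ∈ Finset.Iic m, Φ ω j
      rw [zero_add, show ∑ j ∈ Finset.Iic m, Φ ω j = ∑ j ∈ Finset.Iic m, X j ω from rfl,
        htel m]
      exact h5
    · right
      intro m
      have h4 := hR (τ (Fin.castSucc (Fin.rev m))) (hθ m).1 (hθ m).2
      have h5 : (0:ℝ) < B (τ (Fin.castSucc (Fin.rev m))) ω - B Ttil ω := by linarith
      show 0 < 0 + ∑ j ∈ Finset.Iic m, Ψ ω j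
      have h6 : ∑ j ∈ Finset.Iic m, Ψ ω j = -∑ j ∈ Finset.Iic m, X j ω := by
        rw [← Finset.sum_neg_distrib]
      rw [zero_add, h6, htel m]
      linarith
  calc P {ω | ρ ω = Ttil}
      ≤ P (Φ ⁻¹' (coreSet (n+1) 0) ∪ Ψ ⁻¹' (coreSet (n+1) 0)) := measure_mono hsubset
    _ ≤ P (Φ ⁻¹' (coreSet (n+1) 0)) + P (Ψ ⁻¹' (coreSet (n+1) 0)) := measure_union_le _ _
    _ ≤ ENNReal.ofReal ((9/10 : ℝ)^(n+1)) + ENNReal.ofReal ((9/10 : ℝ)^(n+1)) := by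
        apply add_le_add
        · rw [← Measure.map_apply hΦmeas (coreSet_measurable _ _), hmapΦ]
          exact hbound
        · rw [← Measure.map_apply hΨmeas (coreSet_measurable _ _), hmapΨ]
          exact hbound
    _ = ENNReal.ofReal (2 * (9/10)^(n+1)) := by
        rw [← ENNReal.ofReal_add (by positivity) (by positivity)]
        congr 1
        ring

end SwitchingIdentities
end
end
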